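/- arXiv:1404.6509 — 2 statements merged into one kernel-verified Lean document; each statement's English description precedes it below -/
import Mathlib

section
/- If two systems of cycles s₀ and s₁ in ℤ² are flip homotopic, then P_{s₀}(q) = P_{s₁}(q). -/
noncomputable section
open Classical
attribute [local instance] Classical.propDecidable

/-- A unit cube of ℤ³, identified with the integer coordinates of its corner:
`(x,y,z)` stands for the cube `(x,y,z) + [0,1]³` with center `(x+½, y+½, z+½)`. -/
abbrev Cell : Type := ℤ × ℤ × ℤ

/-- A square of the plane grid ℤ², identified similarly. -/
abbrev Sq : Type := ℤ × ℤ

/-- A directed edge of the grid graph ℤ². -/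
abbrev DEdge : Type := Sq × Sq

/-- The cube `C(x♯,y♯,z♯)` is white if `x+y+z` is even (black otherwise). -/
def cellWhite (c : Cell) : Prop := (c.1 + c.2.1 + c.2.2) % 2 = 0

/-- Checkerboard coloring of plane squares: black iff coordinate sum is odd. -/
def sqBlack (s : Sq) : Prop := (s.1 + s.2) % 2 = 1

/-- Two cubes are adjacent (share a face) iff their centers are at distance 1. -/
def adj3 (a b : Cell) : Prop :=
  (a.1 - b.1).natAbs + (a.2.1 - b.2.1).natAbs + (a.2.2 - b.2.2).natAbs = 1

/-- Two plane squares are adjacent iff their centers are at distance 1. -/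
def adj2 (a b : Sq) : Prop := (a.1 - b.1).natAbs + (a.2 - b.2).natAbs = 1

/-- A domino brick (dimer): the union of two cubes sharing a face. -/
def IsDimer (d : Finset Cell) : Prop := ∃ a b : Cell, adj3 a b ∧ d = {a, b}

/-- A tiling of a region `R`: a set of dimers contained in `R` covering each cube exactly once. -/
def IsTiling (R : Finset Cell) (T : Finset (Finset Cell)) : Prop :=
  (∀ d ∈ T, IsDimer d ∧ d ⊆ R) ∧ ∀ c ∈ R, ∃! d, d ∈ T ∧ c ∈ d

/-- A flip: remove two disjoint parallel dimers forming a 2×2×1 slab and place them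
back in the unique other position. -/
def FlipStep (T₀ T₁ : Finset (Finset Cell)) : Prop :=
  ∃ d₁ d₂ d₃ d₄ : Finset Cell,
    d₁ ∈ T₀ ∧ d₂ ∈ T₀ ∧ d₃ ∈ T₁ ∧ d₄ ∈ T₁ ∧
    IsDimer d₁ ∧ IsDimer d₂ ∧ IsDimer d₃ ∧ IsDimer d₄ ∧
    Disjoint d₁ d₂ ∧ Disjoint d₃ d₄ ∧
    d₁ ∪ d₂ = d₃ ∪ d₄ ∧ ({d₁, d₂} : Finset (Finset Cell)) ≠ {d₃, d₄} ∧
    T₀ \ {d₁, d₂} = T₁ \ {d₃, d₄}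

/-- Two tilings are in the same flip connected component. -/
def FlipConnected : Finset (Finset Cell) → Finset (Finset Cell) → Prop :=
  Relation.ReflTransGen FlipStep

/-- The cells of the floor at height `z` over the plane region `D`. -/
def floorCells (D : Finset Sq) (z : ℤ) : Finset Cell := D.image fun s => (s.1, s.2, z)

/-- A two-story region with floors `D₀` (top, z = 0) and `D₁` (bottom, z = 1). -/
def twoStoryCells (D₀ D₁ : Finset Sq) : Finset Cell := floorCells D₀ 0 ∪ floorCells D₁ 1

/-- A duplex region: a two-story region with two identical floors. -/
def duplexCells (D : Finset Sq) : Finset Cell := twoStoryCells D D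

/-- The closed plane region (union of closed unit squares) associated to `D`;
used to express that a floor is (connected and) simply connected. -/
def planeRegion (D : Finset Sq) : Set (ℝ × ℝ) :=
  ⋃ s ∈ D, Set.Icc ((s.1 : ℝ), (s.2 : ℝ)) ((s.1 : ℝ) + 1, (s.2 : ℝ) + 1)

/-- The z-dimer (jewel) over the square `s`, joining the two floors of a two-story region. -/
def zDimerAt (s : Sq) : Finset Cell := {(s.1, s.2, 0), (s.1, s.2, 1)}

/-- A dimer parallel to the z axis. -/
def IsZDimer (d : Finset Cell) : Prop := ∃ a : Cell, d = {a, (a.1, a.2.1, a.2.2 + 1)}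

/-- The jewels of a two-story tiling: squares of the drawing occupied by z-dimers. -/
def jewelSquares (D : Finset Sq) (T : Finset (Finset Cell)) : Finset Sq :=
  D.filter fun s => zDimerAt s ∈ T

/-- Orientation convention for the associated drawing: a horizontal dimer of the
floor z = 0 is traversed from its black square to its white square, and a horizontal
dimer of the floor z = 1 from its white square to its black square. -/
def goodDir (a b : Cell) : Prop :=
  adj3 a b ∧ a.2.2 = b.2.2 ∧
    ((a.2.2 = 0 ∧ sqBlack (a.1, a.2.1)) ∨ (a.2.2 = 1 ∧ ¬ sqBlack (a.1, a.2.1)))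

/-- The directed edges of the associated drawing of a two-story tiling: each horizontal
dimer, projected to the plane and oriented by the convention above. -/
def tilingEdges (T : Finset (Finset Cell)) : Finset DEdge :=
  ((T.biUnion fun d => d ×ˢ d).filter fun p => goodDir p.1 p.2).image
    fun p => ((p.1.1, p.1.2.1), (p.2.1, p.2.2.1))

/-- Signed crossing of the oriented grid edge `a → b` with the horizontal ray going
right from the jewel position `p` (at height p.2 + ½): the building block of winding
numbers. -/
def edgeWind (p a b : Sq) : ℤ :=
  if a.1 = b.1 ∧ p.1 < a.1 ∧ a.2 = p.2 ∧ b.2 = p.2 + 1 then 1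
  else if a.1 = b.1 ∧ p.1 < a.1 ∧ a.2 = p.2 + 1 ∧ b.2 = p.2 then -1
  else 0

/-- `k_t(j)`: the sum of the winding numbers of all the cycles of the associated
drawing of `T` around the jewel `j`, computed as the total signed crossing number. -/
def windTot (T : Finset (Finset Cell)) (j : Sq) : ℤ :=
  ∑ e ∈ tilingEdges T, edgeWind j e.1 e.2

/-- The polynomial invariant `P_t(q) = Σ_{j black} q^{k_t(j)} − Σ_{j white} q^{k_t(j)}`
of a tiling of a duplex region, as a Laurent polynomial in `q = T 1`. -/
def Pt (D : Finset Sq) (T : Finset (Finset Cell)) : LaurentPolynomial ℤ :=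
  ∑ j ∈ jewelSquares D T,
    (if sqBlack j then 1 else -1) * LaurentPolynomial.T (windTot T j)

/-- The twist `Tw(t) = P_t'(1)` of a tiling of a duplex region. -/
def twistOf (D : Finset Sq) (T : Finset (Finset Cell)) : ℤ :=
  ∑ j ∈ jewelSquares D T, (if sqBlack j then windTot T j else -(windTot T j))

/-- Evaluation of a Laurent polynomial at `q = 1`. -/
def evalOne (p : LaurentPolynomial ℤ) : ℤ := p.coeff.sum fun _ a => a

/-- Evaluation of the derivative of a Laurent polynomial at `q = 1`. -/
def evalDerivOne (p : LaurentPolynomial ℤ) : ℤ := p.coeff.sum fun n a => n * a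

/-! ### Holes, sources, sinks and ghost curves (general two-story regions) -/

/-- The holes of a two-story region: squares of the symmetric difference of the floors. -/
def holes (D₀ D₁ : Finset Sq) : Finset Sq := (D₀ \ D₁) ∪ (D₁ \ D₀)

/-- Sources: white holes. -/
def sources (D₀ D₁ : Finset Sq) : Finset Sq := (holes D₀ D₁).filter fun s => ¬ sqBlack s

/-- Sinks: black holes. -/
def sinks (D₀ D₁ : Finset Sq) : Finset Sq := (holes D₀ D₁).filter sqBlack

/-- A choice of ghost curves for a two-story region: each source is joined to a sink
by a lattice path avoiding all squares common to both floors, and the assignment of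
sinks to sources is bijective. -/
structure GhostChoice (D₀ D₁ : Finset Sq) where
  curve : Sq → List Sq
  head_eq : ∀ s ∈ sources D₀ D₁, (curve s).head? = some s
  chain : ∀ s ∈ sources D₀ D₁, (curve s).Chain' adj2
  avoid : ∀ s ∈ sources D₀ D₁, ∀ v ∈ curve s, v ∉ D₀ ∩ D₁
  lastBij : Set.BijOn (fun s => ((curve s).getLast?).getD s)
      ↑(sources D₀ D₁) ↑(sinks D₀ D₁)

/-- Signed crossing number of an (open) lattice path with the ray from `j`. -/
def pathWind (j : Sq) (l : List Sq) : ℤ :=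
  ((l.zip l.tail).map fun e => edgeWind j e.1 e.2).sum

/-- Total winding contribution of the ghost curves around `j`. -/
def ghostWind {D₀ D₁ : Finset Sq} (g : GhostChoice D₀ D₁) (j : Sq) : ℤ :=
  ∑ s ∈ sources D₀ D₁, pathWind j (g.curve s)

/-- The polynomial invariant of a tiling of a general two-story region, relative to a
choice of ghost curves. -/
def PtG {D₀ D₁ : Finset Sq} (g : GhostChoice D₀ D₁) (T : Finset (Finset Cell)) :
    LaurentPolynomial ℤ :=
  ∑ j ∈ jewelSquares (D₀ ∩ D₁) T,
    (if sqBlack j then 1 else -1) * LaurentPolynomial.T (windTot T j + ghostWind g j)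

/-- The twist `Tw(t) = P_t'(1)` relative to a choice of ghost curves. -/
def twistG {D₀ D₁ : Finset Sq} (g : GhostChoice D₀ D₁) (T : Finset (Finset Cell)) : ℤ :=
  ∑ j ∈ jewelSquares (D₀ ∩ D₁) T,
    (if sqBlack j then windTot T j + ghostWind g j else -(windTot T j + ghostWind g j))

/-! ### Trits -/

/-- Translation of configurations in the plane directions. -/
def trCell (v : Sq) (c : Cell) : Cell := (c.1 + v.1, c.2.1 + v.2, c.2.2)
def trDimer (v : Sq) (d : Finset Cell) : Finset Cell := d.image (trCell v)
def trConf (v : Sq) (S : Finset (Finset Cell)) : Finset (Finset Cell) := S.image (trDimer v)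

/-- The local configurations (before, after) of a positive trit inside a 2×2×2 cube
with floors z = 0, 1: three pairwise non-parallel dimers replaced by the unique other
configuration, in the positive direction. -/
def posTritPatterns : List (Finset (Finset Cell) × Finset (Finset Cell)) :=
  [ ({({(0, 0, 0), (1, 0, 0)} : Finset Cell), ({(0, 1, 0), (0, 1, 1)} : Finset Cell),
        ({(1, 0, 1), (1, 1, 1)} : Finset Cell)},
     {({(0, 0, 0), (0, 1, 0)} : Finset Cell), ({(0, 1, 1), (1, 1, 1)} : Finset Cell),
        ({(1, 0, 0), (1, 0, 1)} : Finset Cell)}),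
    ({({(0, 0, 1), (0, 1, 1)} : Finset Cell), ({(0, 1, 0), (1, 1, 0)} : Finset Cell),
        ({(1, 0, 0), (1, 0, 1)} : Finset Cell)},
     {({(0, 0, 1), (1, 0, 1)} : Finset Cell), ({(0, 1, 0), (0, 1, 1)} : Finset Cell),
        ({(1, 0, 0), (1, 1, 0)} : Finset Cell)}),
    ({({(0, 0, 0), (0, 0, 1)} : Finset Cell), ({(0, 1, 1), (1, 1, 1)} : Finset Cell),
        ({(1, 0, 0), (1, 1, 0)} : Finset Cell)},
     {({(0, 0, 0), (1, 0, 0)} : Finset Cell), ({(0, 0, 1), (0, 1, 1)} : Finset Cell),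
        ({(1, 1, 0), (1, 1, 1)} : Finset Cell)}),
    ({({(0, 0, 0), (0, 1, 0)} : Finset Cell), ({(0, 0, 1), (1, 0, 1)} : Finset Cell),
        ({(1, 1, 0), (1, 1, 1)} : Finset Cell)},
     {({(0, 0, 0), (0, 0, 1)} : Finset Cell), ({(0, 1, 0), (1, 1, 0)} : Finset Cell),
        ({(1, 0, 1), (1, 1, 1)} : Finset Cell)})]

/-- A positive trit: some translate of one of the positive local configurations is
replaced by the corresponding other configuration. -/
def PosTritStep (T₀ T₁ : Finset (Finset Cell)) : Prop :=
  ∃ (v : Sq) (AB : Finset (Finset Cell) × Finset (Finset Cell)),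
    AB ∈ posTritPatterns ∧ trConf v AB.1 ⊆ T₀ ∧
    T₁ = (T₀ \ trConf v AB.1) ∪ trConf v AB.2

/-- A negative trit is the reverse of a positive trit. -/
def NegTritStep (T₀ T₁ : Finset (Finset Cell)) : Prop := PosTritStep T₁ T₀

/-! ### Systems of cycles (socks) in ℤ² -/

/-- The list of directed edges of a cyclic list of vertices. -/
def cyclicPairs (l : List Sq) : List DEdge := l.zip (l.rotate 1)

/-- A simple oriented lattice cycle. -/
def IsSimpleCycle (l : List Sq) : Prop :=
  l.Nodup ∧ 4 ≤ l.length ∧ ∀ e ∈ cyclicPairs l, adj2 e.1 e.2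

/-- A system of cycles (sock) in ℤ²: a finite collection of disjoint simple oriented
cycles.  Vertices of ℤ² lying on no cycle are its jewels. -/
structure Sock where
  cycles : Finset (List Sq)
  simple : ∀ l ∈ cycles, IsSimpleCycle l
  disj : ∀ l ∈ cycles, ∀ l' ∈ cycles, l ≠ l' → ∀ v ∈ l, v ∉ l'

/-- The directed edges of a sock. -/
def sockEdges (s : Sock) : Finset DEdge := s.cycles.sup fun l => (cyclicPairs l).toFinset

/-- The vertices lying on the cycles of a sock. -/
def sockVerts (s : Sock) : Finset Sq := s.cycles.sup List.toFinset

/-- `k_s(j)`: the sum of the winding numbers of the cycles of `s` around `j`. -/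
def windS (s : Sock) (j : Sq) : ℤ := ∑ e ∈ sockEdges s, edgeWind j e.1 e.2

/-- A finite region of ℤ² containing every jewel with nonzero winding number. -/
def sockBox (s : Sock) : Finset Sq :=
  (sockVerts s).biUnion fun a => (sockVerts s).biUnion fun b => Finset.Icc (a ⊓ b) (a ⊔ b)

/-- The invariant `P_s(q)` of a sock: the (finite) sum of `± q^{k_s(j)}` over the
jewels `j` with `k_s(j) ≠ 0`, signed by color. -/
def Psock (s : Sock) : LaurentPolynomial ℤ :=
  ∑ j ∈ (sockBox s).filter (fun j => j ∉ sockVerts s ∧ windS s j ≠ 0),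
    (if sqBlack j then 1 else -1) * LaurentPolynomial.T (windS s j)

/-- The empty sock. -/
def emptySock : Sock where
  cycles := ∅
  simple := fun l hl => absurd hl (Finset.notMem_empty l)
  disj := fun l hl => absurd hl (Finset.notMem_empty l)

def rev (e : DEdge) : DEdge := (e.2, e.1)

/-- The boundary of the unit lattice square with lower-left corner `p`, as an oriented
4-cycle of directed edges (`o = true`: counterclockwise). -/
def unitSq (p : Sq) (o : Bool) : Finset DEdge :=
  if o then
    {((p, (p.1 + 1, p.2)) : DEdge), (((p.1 + 1, p.2), (p.1 + 1, p.2 + 1)) : DEdge),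
     (((p.1 + 1, p.2 + 1), (p.1, p.2 + 1)) : DEdge), (((p.1, p.2 + 1), p) : DEdge)}
  else
    {(((p.1 + 1, p.2), p) : DEdge), (((p.1 + 1, p.2 + 1), (p.1 + 1, p.2)) : DEdge),
     (((p.1, p.2 + 1), (p.1 + 1, p.2 + 1)) : DEdge), ((p, (p.1, p.2 + 1)) : DEdge)}

/-- Local modification of the directed edge set of a sock along the oriented unit
square `sq`: each edge of `sq` whose reverse is present gets removed, and the other
edges of `sq` get added. -/
def SqMove (E₀ E₁ sq : Finset DEdge) : Prop :=
  E₁ = (E₀ \ sq.image rev) ∪ sq.filter fun e => rev e ∉ E₀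

/-- The removed edges are exactly two *consecutive* edges of the square: this is the
local move of a trit (a jewel is moved across the diagonal of the square), not a flip. -/
def TwoAdjRemoved (E₀ sq : Finset DEdge) : Prop :=
  ∃ e ∈ sq, ∃ f ∈ sq, e ≠ f ∧ e.2 = f.1 ∧ rev e ∈ E₀ ∧ rev f ∈ E₀ ∧
    ∀ g ∈ sq, rev g ∈ E₀ → g = e ∨ g = f

/-- The three flip moves on socks (creating/destroying a unit square, sliding an edge
across a square, merging/splitting two cycles along opposite edges of a square). -/
def FlipMoveSock (s₀ s₁ : Sock) : Prop :=
  ∃ p o, SqMove (sockEdges s₀) (sockEdges s₁) (unitSq p o) ∧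
    ¬ TwoAdjRemoved (sockEdges s₀) (unitSq p o)

/-- The trit move on socks: a jewel is pushed into / pulled out of a cycle across a
corner. -/
def TritMoveSock (s₀ s₁ : Sock) : Prop :=
  ∃ p o, SqMove (sockEdges s₀) (sockEdges s₁) (unitSq p o) ∧
    TwoAdjRemoved (sockEdges s₀) (unitSq p o)

/-- Flip homotopy of socks in ℤ². -/
def FlipHomotopic : Sock → Sock → Prop := Relation.ReflTransGen FlipMoveSock

/-- A sock lies in the grid graph `G(R)` of the duplex region over `D`. -/
def SockIn (D : Finset Sq) (s : Sock) : Prop := sockVerts s ⊆ D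

/-- A flip or trit move between socks both lying in `G(R)`. -/
def FTMoveIn (D : Finset Sq) (s₀ s₁ : Sock) : Prop :=
  (FlipMoveSock s₀ s₁ ∨ TritMoveSock s₀ s₁) ∧ SockIn D s₀ ∧ SockIn D s₁

/-- The sock associated to a duplex tiling `T`: its directed edges are those of the
associated drawing of `T`, with trivial cycles (doubled edges) removed. -/
def SockOf (T : Finset (Finset Cell)) (s : Sock) : Prop :=
  sockEdges s = (tilingEdges T).filter fun e => rev e ∉ tilingEdges T

/-- The boundary of the square `[n−r, n+r] × [−r, r]` centered at `(n,0)` on the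
x-axis, as an oriented cycle of directed edges (`o = true`: counterclockwise). -/
def squareBoundary (n r : ℤ) (o : Bool) : Finset DEdge :=
  let fwd : Finset DEdge :=
    ((Finset.Icc (n - r) (n + r - 1)).image fun x => (((x, -r) : Sq), ((x + 1, -r) : Sq)))
    ∪ ((Finset.Icc (-r) (r - 1)).image fun y => (((n + r, y) : Sq), ((n + r, y + 1) : Sq)))
    ∪ ((Finset.Icc (n - r) (n + r - 1)).image fun x => (((x + 1, r) : Sq), ((x, r) : Sq)))
    ∪ ((Finset.Icc (-r) (r - 1)).image fun y => (((n - r, y + 1) : Sq), ((n - r, y) : Sq)))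
  if o then fwd else fwd.image rev

/-- `l` is a square cycle of radius `r` centered at `(n,0)` with orientation `o`. -/
def IsSquareCycle (l : List Sq) (n r : ℤ) (o : Bool) : Prop :=
  (cyclicPairs l).toFinset = squareBoundary n r o

/-- An untangled sock: every cycle is a square cycle centered on the x-axis, belonging
to a boxed jewel (all smaller concentric squares are present, with the same
orientation). -/
def Untangled (s : Sock) : Prop :=
  ∀ l ∈ s.cycles, ∃ n r o, 1 ≤ r ∧ IsSquareCycle l n r o ∧
    ∀ r', 1 ≤ r' → r' < r → ∃ l' ∈ s.cycles, IsSquareCycle l' n r' o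

/-! ### Embeddings into boxes -/

/-- The rectangle of squares with corners `a`, `b`. -/
def boxSq (a b : Sq) : Finset Sq := Finset.Icc a b

/-- The embedding of a duplex tiling of `D × [0,2]` into the two-floored box over
`boxSq a b`: the complement is tiled by z-dimers. -/
def embed2 (D : Finset Sq) (a b : Sq) (T : Finset (Finset Cell)) :
    Finset (Finset Cell) :=
  T ∪ (boxSq a b \ D).image zDimerAt

/-- The z-dimer joining the two bottom floors (z = 2, 3) over the square `s`. -/
def zDimerAt' (s : Sq) : Finset Cell := {(s.1, s.2, 2), (s.1, s.2, 3)}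

/-- The embedding of a duplex tiling into a four-floored box: the tiling occupies the
top two floors, the rest of the top two floors and all of the bottom two floors are
filled with z-dimers. -/
def embed4 (D : Finset Sq) (a b : Sq) (T : Finset (Finset Cell)) :
    Finset (Finset Cell) :=
  embed2 D a b T ∪ (boxSq a b).image zDimerAt'

-- ======== auxiliary development ========
namespace PsockAux

lemma edgeWind_rev (j a b : Sq) : edgeWind j b a = - edgeWind j a b := by
  unfold edgeWind
  split_ifs <;> omega

lemma mem_cyclicPairs_getElem {l : List Sq} {e : DEdge} (h : e ∈ cyclicPairs l) :
    ∃ i : ℕ, ∃ hi : i < l.length, e.1 = l[i] ∧ e.2 = l[(i+1) % l.length]'(Nat.mod_lt _ (by omega)) := by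
  unfold cyclicPairs at h
  obtain ⟨n, hn, hg⟩ := List.mem_iff_getElem.1 h
  have hlen : (l.zip (l.rotate 1)).length = l.length := by
    simp [List.length_zip]
  have hn' : n < l.length := by omega
  refine ⟨n, hn', ?_, ?_⟩
  · rw [← hg]; rw [List.getElem_zip]
  · rw [← hg]; rw [List.getElem_zip]; simp [List.getElem_rotate]

lemma getElem_mem_cyclicPairs {l : List Sq} {i : ℕ} (hi : i < l.length) :
    ((l[i], l[(i+1) % l.length]'(Nat.mod_lt _ (by omega))) : DEdge) ∈ cyclicPairs l := by
  unfold cyclicPairs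
  have hlen : (l.zip (l.rotate 1)).length = l.length := by simp [List.length_zip]
  rw [List.mem_iff_getElem]
  refine ⟨i, by omega, ?_⟩
  rw [List.getElem_zip]; simp [List.getElem_rotate]

lemma mem_sockEdges {s : Sock} {e : DEdge} :
    e ∈ sockEdges s ↔ ∃ l ∈ s.cycles, e ∈ cyclicPairs l := by
  unfold sockEdges
  simp [Finset.mem_sup]

lemma mem_sockVerts {s : Sock} {v : Sq} :
    v ∈ sockVerts s ↔ ∃ l ∈ s.cycles, v ∈ l := by
  unfold sockVerts
  simp [Finset.mem_sup]

lemma cyclicPairs_fst_mem {l : List Sq} {e : DEdge} (h : e ∈ cyclicPairs l) : e.1 ∈ l := by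
  obtain ⟨i, hi, h1, _⟩ := mem_cyclicPairs_getElem h
  rw [h1]; exact List.getElem_mem _

lemma cyclicPairs_snd_mem {l : List Sq} {e : DEdge} (h : e ∈ cyclicPairs l) : e.2 ∈ l := by
  obtain ⟨i, hi, _, h2⟩ := mem_cyclicPairs_getElem h
  rw [h2]; exact List.getElem_mem _

lemma edge_fst_mem_verts {s : Sock} {e : DEdge} (h : e ∈ sockEdges s) : e.1 ∈ sockVerts s := by
  obtain ⟨l, hl, he⟩ := mem_sockEdges.1 h
  exact mem_sockVerts.2 ⟨l, hl, cyclicPairs_fst_mem he⟩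

lemma edge_snd_mem_verts {s : Sock} {e : DEdge} (h : e ∈ sockEdges s) : e.2 ∈ sockVerts s := by
  obtain ⟨l, hl, he⟩ := mem_sockEdges.1 h
  exact mem_sockVerts.2 ⟨l, hl, cyclicPairs_snd_mem he⟩

lemma exists_out {s : Sock} {v : Sq} (h : v ∈ sockVerts s) :
    ∃ e ∈ sockEdges s, e.1 = v := by
  obtain ⟨l, hl, hv⟩ := mem_sockVerts.1 h
  obtain ⟨i, hi, hg⟩ := List.mem_iff_getElem.1 hv
  exact ⟨(l[i], l[(i+1) % l.length]'(Nat.mod_lt _ (by omega))),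
    mem_sockEdges.2 ⟨l, hl, getElem_mem_cyclicPairs hi⟩, hg⟩

lemma pred_mod_succ {i n : ℕ} (hi : i < n) (hn : 1 ≤ n) :
    (((i + n - 1) % n) + 1) % n = i := by
  rcases Nat.eq_zero_or_pos i with h0 | h1
  · subst h0
    have h2 : (0 + n - 1) = n - 1 := by omega
    rw [h2, Nat.mod_eq_of_lt (by omega : n - 1 < n)]
    have h3 : n - 1 + 1 = n := by omega
    rw [h3, Nat.mod_self]
  · have h2 : i + n - 1 = n + (i - 1) := by omega
    rw [h2, Nat.add_mod_left, Nat.mod_eq_of_lt (by omega : i - 1 < n)]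
    have h3 : i - 1 + 1 = i := by omega
    rw [h3, Nat.mod_eq_of_lt hi]

lemma getElem_eq_of_idx {α : Type*} {l : List α} {i j : ℕ} (h : i = j)
    (hi : i < l.length) (hj : j < l.length) : l[i]'hi = l[j]'hj := by subst h; rfl

lemma exists_in {s : Sock} {v : Sq} (h : v ∈ sockVerts s) :
    ∃ e ∈ sockEdges s, e.2 = v := by
  obtain ⟨l, hl, hv⟩ := mem_sockVerts.1 h
  obtain ⟨i, hi, hg⟩ := List.mem_iff_getElem.1 hv
  have h4 : 4 ≤ l.length := (s.simple l hl).2.1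
  have hj : (i + l.length - 1) % l.length < l.length := Nat.mod_lt _ (by omega)
  refine ⟨_, mem_sockEdges.2 ⟨l, hl, getElem_mem_cyclicPairs hj⟩, ?_⟩
  show l[(((i + l.length - 1) % l.length) + 1) % l.length]'(Nat.mod_lt _ (by omega)) = v
  exact (getElem_eq_of_idx (pred_mod_succ hi (by omega)) _ _).trans hg

lemma same_list_of_shared_vert {s : Sock} {l l' : List Sq} (hl : l ∈ s.cycles)
    (hl' : l' ∈ s.cycles) {v : Sq} (hv : v ∈ l) (hv' : v ∈ l') : l = l' := by
  by_contra hne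
  exact s.disj l hl l' hl' hne v hv hv'

lemma out_unique {s : Sock} {e f : DEdge} (he : e ∈ sockEdges s) (hf : f ∈ sockEdges s)
    (h : e.1 = f.1) : e = f := by
  obtain ⟨l, hl, hel⟩ := mem_sockEdges.1 he
  obtain ⟨l', hl', hfl⟩ := mem_sockEdges.1 hf
  have hll : l = l' := same_list_of_shared_vert hl hl'
    (cyclicPairs_fst_mem hel) (h ▸ cyclicPairs_fst_mem hfl)
  subst hll
  obtain ⟨i, hi, he1, he2⟩ := mem_cyclicPairs_getElem hel
  obtain ⟨i', hi', hf1, hf2⟩ := mem_cyclicPairs_getElem hfl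
  have hnd := (s.simple l hl).1
  have : i = i' := by
    rw [← hnd.getElem_inj_iff (hi := hi) (hj := hi')]
    rw [← he1, ← hf1, h]
  subst this
  ext <;> simp [he1, he2, hf1, hf2, Prod.ext_iff] at * <;> tauto

lemma in_unique {s : Sock} {e f : DEdge} (he : e ∈ sockEdges s) (hf : f ∈ sockEdges s)
    (h : e.2 = f.2) : e = f := by
  obtain ⟨l, hl, hel⟩ := mem_sockEdges.1 he
  obtain ⟨l', hl', hfl⟩ := mem_sockEdges.1 hf
  have hll : l = l' := same_list_of_shared_vert hl hl'
    (cyclicPairs_snd_mem hel) (h ▸ cyclicPairs_snd_mem hfl)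
  subst hll
  obtain ⟨i, hi, he1, he2⟩ := mem_cyclicPairs_getElem hel
  obtain ⟨i', hi', hf1, hf2⟩ := mem_cyclicPairs_getElem hfl
  have hnd := (s.simple l hl).1
  have h4 : 4 ≤ l.length := (s.simple l hl).2.1
  have : (i+1) % l.length = (i'+1) % l.length := by
    rw [← hnd.getElem_inj_iff (hi := Nat.mod_lt _ (by omega)) (hj := Nat.mod_lt _ (by omega))]
    rw [← he2, ← hf2, h]
  have hii : i = i' := by
    rcases Nat.lt_or_ge (i+1) l.length with h1 | h1 <;>
    rcases Nat.lt_or_ge (i'+1) l.length with h2 | h2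
    · rw [Nat.mod_eq_of_lt h1, Nat.mod_eq_of_lt h2] at this; omega
    · have : i + 1 = (i' + 1) % l.length := by rw [← this, Nat.mod_eq_of_lt h1]
      have h3 : i' + 1 = l.length := by omega
      rw [h3, Nat.mod_self] at this; omega
    · have h3 : i + 1 = l.length := by omega
      rw [h3, Nat.mod_self, Nat.mod_eq_of_lt h2] at this; omega
    · omega
  subst hii
  ext <;> simp [he1, he2, hf1, hf2, Prod.ext_iff] at * <;> tauto

lemma not_rev_mem {s : Sock} {e : DEdge} (he : e ∈ sockEdges s) :
    rev e ∉ sockEdges s := by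
  intro hr
  obtain ⟨l, hl, hel⟩ := mem_sockEdges.1 he
  obtain ⟨l', hl', hrl⟩ := mem_sockEdges.1 hr
  have hll : l = l' := same_list_of_shared_vert hl hl'
    (cyclicPairs_fst_mem hel) (cyclicPairs_snd_mem hrl)
  subst hll
  obtain ⟨i, hi, he1, he2⟩ := mem_cyclicPairs_getElem hel
  obtain ⟨i', hi', hf1, hf2⟩ := mem_cyclicPairs_getElem hrl
  have hnd := (s.simple l hl).1
  have h4 : 4 ≤ l.length := (s.simple l hl).2.1
  -- rev e = (e.2, e.1); so e.2 = l[i'], e.1 = l[(i'+1)%n]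
  have hA : i' = (i+1) % l.length := by
    rw [← hnd.getElem_inj_iff (hi := hi') (hj := Nat.mod_lt _ (by omega))]
    rw [← hf1, ← he2]; rfl
  have hB : (i'+1) % l.length = i := by
    rw [← hnd.getElem_inj_iff (hi := Nat.mod_lt _ (by omega)) (hj := hi)]
    rw [← hf2, ← he1]; rfl
  subst hA
  set n := l.length with hn
  rcases Nat.lt_or_ge (i+1) n with h1 | h1
  · rw [Nat.mod_eq_of_lt h1] at hB
    rcases Nat.lt_or_ge (i+2) n with h2 | h2
    · rw [show i + 1 + 1 = i + 2 by omega, Nat.mod_eq_of_lt h2] at hB; omega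
    · have h3 : i + 1 + 1 = n + (i + 2 - n) := by omega
      rw [h3, Nat.add_mod_left, Nat.mod_eq_of_lt (by omega)] at hB
      omega
  · have h3 : i + 1 = n := by omega
    rw [h3, Nat.mod_self] at hB
    rw [Nat.mod_eq_of_lt (by omega : 0 + 1 < n)] at hB
    omega

lemma edge_adj {s : Sock} {e : DEdge} (he : e ∈ sockEdges s) : adj2 e.1 e.2 := by
  obtain ⟨l, hl, hel⟩ := mem_sockEdges.1 he
  exact (s.simple l hl).2.2 e hel

lemma cyclicPairs_nodup {l : List Sq} (h : l.Nodup) : (cyclicPairs l).Nodup := by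
  have hf : (cyclicPairs l).map Prod.fst = l := by
    unfold cyclicPairs
    exact List.map_fst_zip (by simp)
  exact List.Nodup.of_map Prod.fst (by rw [hf]; exact h)

lemma sum_sockEdges_eq (s : Sock) (F : DEdge → ℤ) :
    ∑ e ∈ sockEdges s, F e = ∑ l ∈ s.cycles, ((cyclicPairs l).map F).sum := by
  unfold sockEdges
  rw [Finset.sup_eq_biUnion, Finset.sum_biUnion]
  · refine Finset.sum_congr rfl fun l hl => ?_
    rw [List.sum_toFinset _ (cyclicPairs_nodup (s.simple l hl).1)]
  · intro l hl l' hl' hne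
    simp only [Finset.disjoint_left]
    intro e he he'
    simp only [List.mem_toFinset] at he he'
    exact s.disj l hl l' hl' hne e.1 (cyclicPairs_fst_mem he) (cyclicPairs_fst_mem he')

lemma map_sum_sub (g : Sq → ℤ) (L : List DEdge) :
    (L.map (fun e => g e.2 - g e.1)).sum
      = (L.map (fun e => g e.2)).sum - (L.map (fun e => g e.1)).sum := by
  induction L with
  | nil => simp
  | cons a t ih => simp only [List.map_cons, List.sum_cons, ih]; ring

lemma telescope (g : Sq → ℤ) (l : List Sq) :
    ((cyclicPairs l).map (fun e => g e.2 - g e.1)).sum = 0 := by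
  rw [map_sum_sub]
  have hs : (cyclicPairs l).map (fun e => g e.2) = (l.rotate 1).map g := by
    unfold cyclicPairs
    rw [show (fun (e : DEdge) => g e.2) = g ∘ Prod.snd from rfl, ← List.map_map]
    rw [List.map_snd_zip (l₁ := l) (l₂ := l.rotate 1) (by simp)]
  have hf : (cyclicPairs l).map (fun e => g e.1) = l.map g := by
    unfold cyclicPairs
    rw [show (fun (e : DEdge) => g e.1) = g ∘ Prod.fst from rfl, ← List.map_map]
    rw [List.map_fst_zip (l₁ := l) (l₂ := l.rotate 1) (by simp)]
  rw [hs, hf, ((l.rotate_perm 1).map g).sum_eq, sub_self]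

lemma sum_sockEdges_telescope (s : Sock) (g : Sq → ℤ) :
    ∑ e ∈ sockEdges s, (g e.2 - g e.1) = 0 := by
  rw [sum_sockEdges_eq]
  refine Finset.sum_eq_zero fun l _ => telescope g l

lemma edgeWind_far {j a b : Sq} (hadj : adj2 a b) (ha : j.1 < a.1) (hb : j.1 < b.1) :
    edgeWind j a b = (if j.2 + 1 ≤ b.2 then (1:ℤ) else 0) - (if j.2 + 1 ≤ a.2 then 1 else 0) := by
  unfold edgeWind adj2 at *
  split_ifs <;> omega

lemma windS_eq_zero_of_left {s : Sock} {j : Sq} (h : ∀ v ∈ sockVerts s, j.1 < v.1) :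
    windS s j = 0 := by
  unfold windS
  have : ∀ e ∈ sockEdges s, edgeWind j e.1 e.2 =
      (fun v : Sq => if j.2 + 1 ≤ v.2 then (1:ℤ) else 0) e.2
      - (fun v : Sq => if j.2 + 1 ≤ v.2 then (1:ℤ) else 0) e.1 := by
    intro e he
    exact edgeWind_far (edge_adj he) (h _ (edge_fst_mem_verts he)) (h _ (edge_snd_mem_verts he))
  rw [Finset.sum_congr rfl this]
  simpa using sum_sockEdges_telescope s (fun v : Sq => if j.2 + 1 ≤ v.2 then (1:ℤ) else 0)

lemma mem_sockBox_of_windS_ne_zero {s : Sock} {j : Sq} (h : windS s j ≠ 0) :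
    j ∈ sockBox s := by
  obtain ⟨e, he, hne⟩ := Finset.exists_ne_zero_of_sum_ne_zero h
  have hv : ∃ v ∈ sockVerts s, j.1 < v.1 ∧ v.2 = j.2 := by
    unfold edgeWind at hne
    split_ifs at hne with h1 h2
    · exact ⟨e.1, edge_fst_mem_verts he, h1.2.1, h1.2.2.1⟩
    · exact ⟨e.2, edge_snd_mem_verts he, h2.1 ▸ h2.2.1, h2.2.2.2⟩
    · exact absurd rfl hne
  obtain ⟨v, hvm, hv1, hv2⟩ := hv
  have ha : ∃ a ∈ sockVerts s, ¬ j.1 < a.1 := by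
    by_contra hc
    push_neg at hc
    exact h (windS_eq_zero_of_left hc)
  obtain ⟨a, ham, ha1⟩ := ha
  unfold sockBox
  rw [Finset.mem_biUnion]
  refine ⟨a, ham, ?_⟩
  rw [Finset.mem_biUnion]
  refine ⟨v, hvm, ?_⟩
  rw [Finset.mem_Icc]
  constructor
  · constructor
    · exact le_trans (inf_le_left (a := a.1) (b := v.1)) (by omega)
    · exact le_trans (inf_le_right (a := a.2) (b := v.2)) (by omega)
  · constructor
    · exact le_trans (by omega : j.1 ≤ v.1) (le_sup_right (a := a.1) (b := v.1))
    · exact le_trans (by omega : j.2 ≤ v.2) (le_sup_right (a := a.2) (b := v.2))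

-- Neighbor winding lemmas
lemma edgeWind_NH (j a b : Sq) :
    edgeWind j a b - edgeWind (j.1 + 1, j.2) a b =
      (if (a, b) = (((j.1+1, j.2), (j.1+1, j.2+1)) : DEdge) then 1 else 0)
      - (if (a, b) = (((j.1+1, j.2+1), (j.1+1, j.2)) : DEdge) then 1 else 0) := by
  unfold edgeWind
  simp only [Prod.ext_iff, Prod.mk.injEq]
  split_ifs <;> omega

lemma windNH (s : Sock) (j : Sq) :
    windS s j - windS s (j.1 + 1, j.2) =
      (if (((j.1+1, j.2), (j.1+1, j.2+1)) : DEdge) ∈ sockEdges s then 1 else 0)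
      - (if (((j.1+1, j.2+1), (j.1+1, j.2)) : DEdge) ∈ sockEdges s then 1 else 0) := by
  unfold windS
  rw [← Finset.sum_sub_distrib]
  have : ∀ e ∈ sockEdges s, edgeWind j e.1 e.2 - edgeWind (j.1+1, j.2) e.1 e.2 =
      (if e = (((j.1+1, j.2), (j.1+1, j.2+1)) : DEdge) then 1 else 0)
      - (if e = (((j.1+1, j.2+1), (j.1+1, j.2)) : DEdge) then (1:ℤ) else 0) := by
    intro e _
    have := edgeWind_NH j e.1 e.2
    simpa using this
  rw [Finset.sum_congr rfl this, Finset.sum_sub_distrib,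
    Finset.sum_ite_eq' (sockEdges s), Finset.sum_ite_eq' (sockEdges s)]

lemma windNH_of_not_vert {s : Sock} {j : Sq} (h : ((j.1 + 1, j.2) : Sq) ∉ sockVerts s) :
    windS s j = windS s (j.1 + 1, j.2) := by
  have h1 : (((j.1+1, j.2), (j.1+1, j.2+1)) : DEdge) ∉ sockEdges s := by
    intro hc; exact h (edge_fst_mem_verts hc)
  have h2 : (((j.1+1, j.2+1), (j.1+1, j.2)) : DEdge) ∉ sockEdges s := by
    intro hc; exact h (edge_snd_mem_verts hc)
  have := windNH s j
  rw [if_neg h1, if_neg h2] at this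
  omega

set_option maxHeartbeats 1000000 in
lemma edgeWind_NV {j a b : Sq} (hadj : adj2 a b) :
    edgeWind j a b - edgeWind (j.1, j.2 + 1) a b =
      ((fun v : Sq => if j.1 < v.1 ∧ v.2 = j.2 + 1 then (1:ℤ) else 0) b
        - (fun v : Sq => if j.1 < v.1 ∧ v.2 = j.2 + 1 then (1:ℤ) else 0) a)
      - ((if (a, b) = (((j.1, j.2+1), (j.1+1, j.2+1)) : DEdge) then 1 else 0)
        - (if (a, b) = (((j.1+1, j.2+1), (j.1, j.2+1)) : DEdge) then 1 else 0)) := by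
  obtain ⟨a1, a2⟩ := a
  obtain ⟨b1, b2⟩ := b
  obtain ⟨j1, j2⟩ := j
  simp only [edgeWind, adj2, Prod.mk.injEq] at hadj ⊢
  have hc : (b1 = a1 + 1 ∧ b2 = a2) ∨ (b1 = a1 - 1 ∧ b2 = a2) ∨
      (b1 = a1 ∧ b2 = a2 + 1) ∨ (b1 = a1 ∧ b2 = a2 - 1) := by omega
  clear hadj
  rcases hc with ⟨h1, h2⟩ | ⟨h1, h2⟩ | ⟨h1, h2⟩ | ⟨h1, h2⟩ <;> subst h1 <;> subst h2 <;>
    split_ifs <;> omega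

lemma windNV (s : Sock) (j : Sq) :
    windS s j - windS s (j.1, j.2 + 1) =
      - ((if (((j.1, j.2+1), (j.1+1, j.2+1)) : DEdge) ∈ sockEdges s then 1 else 0)
         - (if (((j.1+1, j.2+1), (j.1, j.2+1)) : DEdge) ∈ sockEdges s then 1 else 0)) := by
  unfold windS
  rw [← Finset.sum_sub_distrib]
  set g : Sq → ℤ := fun v => if j.1 < v.1 ∧ v.2 = j.2 + 1 then (1:ℤ) else 0 with hg
  have : ∀ e ∈ sockEdges s, edgeWind j e.1 e.2 - edgeWind (j.1, j.2+1) e.1 e.2 =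
      (g e.2 - g e.1)
      - ((if e = (((j.1, j.2+1), (j.1+1, j.2+1)) : DEdge) then 1 else 0)
        - (if e = (((j.1+1, j.2+1), (j.1, j.2+1)) : DEdge) then (1:ℤ) else 0)) := by
    intro e he
    have := edgeWind_NV (j := j) (edge_adj he)
    simpa using this
  rw [Finset.sum_congr rfl this, Finset.sum_sub_distrib, sum_sockEdges_telescope,
    Finset.sum_sub_distrib, Finset.sum_ite_eq' (sockEdges s), Finset.sum_ite_eq' (sockEdges s)]
  ring

lemma windNV_of_not_vert {s : Sock} {j : Sq} (h : ((j.1, j.2 + 1) : Sq) ∉ sockVerts s) :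
    windS s j = windS s (j.1, j.2 + 1) := by
  have h1 : (((j.1, j.2+1), (j.1+1, j.2+1)) : DEdge) ∉ sockEdges s := by
    intro hc; exact h (edge_fst_mem_verts hc)
  have h2 : (((j.1+1, j.2+1), (j.1, j.2+1)) : DEdge) ∉ sockEdges s := by
    intro hc; exact h (edge_snd_mem_verts hc)
  have := windNV s j
  rw [if_neg h1, if_neg h2] at this
  omega

-- ======== Psock as a sum over a large box ========

def Fs (s : Sock) (j : Sq) : LaurentPolynomial ℤ :=
  if j ∈ sockVerts s ∨ windS s j = 0 then 0
  else (if sqBlack j then 1 else -1) * LaurentPolynomial.T (windS s j)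

lemma Psock_eq_sum (s : Sock) (U : Finset Sq) (hU : sockBox s ⊆ U) :
    Psock s = ∑ j ∈ U, Fs s j := by
  unfold Psock
  rw [Finset.sum_filter]
  have step : ∀ j ∈ sockBox s,
      (if j ∉ sockVerts s ∧ windS s j ≠ 0
        then (if sqBlack j then 1 else -1) * LaurentPolynomial.T (windS s j) else 0)
      = Fs s j := by
    intro j _
    unfold Fs
    by_cases h : j ∈ sockVerts s ∨ windS s j = 0
    · rw [if_pos h, if_neg (by tauto)]
    · rw [if_neg h, if_pos (by tauto)]
  rw [Finset.sum_congr rfl step]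
  apply Finset.sum_subset hU
  intro j _ hj
  unfold Fs
  rw [if_pos]
  exact Or.inr (by by_contra hw; exact hj (mem_sockBox_of_windS_ne_zero hw))

lemma sockVerts_eq_endpoints {s : Sock} {v : Sq} :
    v ∈ sockVerts s ↔ ∃ e ∈ sockEdges s, e.1 = v := by
  constructor
  · exact exists_out
  · rintro ⟨e, he, rfl⟩; exact edge_fst_mem_verts he

lemma Psock_congr_edges {s₀ s₁ : Sock} (h : sockEdges s₀ = sockEdges s₁) :
    Psock s₀ = Psock s₁ := by
  have hV : sockVerts s₀ = sockVerts s₁ := by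
    ext v
    rw [sockVerts_eq_endpoints, sockVerts_eq_endpoints, h]
  have hW : ∀ j, windS s₀ j = windS s₁ j := by
    intro j; unfold windS; rw [h]
  have hB : sockBox s₀ = sockBox s₁ := by
    unfold sockBox; rw [hV]
  unfold Psock
  rw [hB]
  have hflt : Finset.filter (fun j => j ∉ sockVerts s₀ ∧ windS s₀ j ≠ 0) (sockBox s₁)
      = Finset.filter (fun j => j ∉ sockVerts s₁ ∧ windS s₁ j ≠ 0) (sockBox s₁) := by
    apply Finset.filter_congr
    intro j _
    rw [hV, hW]
  rw [hflt]
  exact Finset.sum_congr rfl fun j _ => by rw [hW]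

-- ======== the unit square, corners, statuses ========

def cornFn (p : Sq) : Fin 4 → Sq := ![p, (p.1 + 1, p.2), (p.1 + 1, p.2 + 1), (p.1, p.2 + 1)]

def outeFn (p : Sq) (d : Fin 4) (i : Fin 4) : DEdge := (cornFn p i, cornFn p (i + d))

def cornSet (p : Sq) : Finset Sq := Finset.univ.image (cornFn p)

lemma corn_inj (p : Sq) : Function.Injective (cornFn p) := by
  intro i j h
  fin_cases i <;> fin_cases j <;> simp_all [cornFn, Prod.ext_iff] <;> omega

lemma mem_cornSet {p v} : v ∈ cornSet p ↔ ∃ i : Fin 4, cornFn p i = v := by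
  unfold cornSet; simp

lemma mem_unitSq_iff (p : Sq) (o : Bool) (e : DEdge) :
    e ∈ unitSq p o ↔ ∃ i : Fin 4, e = outeFn p (if o then 1 else 3) i := by
  cases o
  · simp only [unitSq, Bool.false_eq_true, if_false, Finset.mem_insert, Finset.mem_singleton]
    constructor
    · rintro (h | h | h | h)
      · exact ⟨1, by simp [outeFn, cornFn, h]⟩
      · exact ⟨2, by simp [outeFn, cornFn, h]⟩
      · exact ⟨3, by simp [outeFn, cornFn, h]⟩
      · exact ⟨0, by simp [outeFn, cornFn, h]⟩
    · rintro ⟨i, rfl⟩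
      fin_cases i <;> simp [outeFn, cornFn]
  · simp only [unitSq, if_true, Finset.mem_insert, Finset.mem_singleton]
    constructor
    · rintro (h | h | h | h)
      · exact ⟨0, by simp [outeFn, cornFn, h]⟩
      · exact ⟨1, by simp [outeFn, cornFn, h]⟩
      · exact ⟨2, by simp [outeFn, cornFn, h]⟩
      · exact ⟨3, by simp [outeFn, cornFn, h]⟩
    · rintro ⟨i, rfl⟩
      fin_cases i <;> simp [outeFn, cornFn]

lemma oute_inj (p : Sq) (d : Fin 4) : Function.Injective (outeFn p d) := by
  intro i j h
  unfold outeFn at h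
  exact corn_inj p (congrArg Prod.fst h)

lemma rev_oute (p d i) : rev (outeFn p d i) = (cornFn p (i + d), cornFn p i) := rfl

lemma rev_rev (e : DEdge) : rev (rev e) = e := rfl

lemma oute_no_doubled {p : Sq} {d i j : Fin 4} (hd4 : d + d ≠ 0)
    (hj : rev (outeFn p d i) = outeFn p d j) : False := by
  have h1 : cornFn p (i + d) = cornFn p j := congrArg Prod.fst hj
  have h2 : cornFn p i = cornFn p (j + d) := congrArg Prod.snd hj
  have e1 : i + d = j := corn_inj p h1
  have e2 : i = j + d := corn_inj p h2
  have h3 : i + (d + d) = i + 0 := by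
    rw [← add_assoc, e1, ← e2, add_zero]
  exact hd4 (add_left_cancel h3)

lemma sq_no_doubled {p : Sq} {o : Bool} {e : DEdge} (hd : e ∈ unitSq p o) :
    rev e ∉ unitSq p o := by
  intro hr
  rw [mem_unitSq_iff] at hd hr
  obtain ⟨i, rfl⟩ := hd
  obtain ⟨j, hj⟩ := hr
  refine oute_no_doubled (d := if o then 1 else 3) ?_ hj
  cases o <;> simp <;> decide

-- corner colors alternate
lemma corn_black_alt (p : Sq) (i : Fin 4) :
    sqBlack (cornFn p i) ↔ ¬ sqBlack (cornFn p (i + 1)) := by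
  fin_cases i <;> simp [cornFn, sqBlack] <;> omega

-- adjacent free corners have equal winding
lemma adjCorner (s : Sock) (p : Sq) (i : Fin 4)
    (h1 : cornFn p i ∉ sockVerts s) (h2 : cornFn p (i + 1) ∉ sockVerts s) :
    windS s (cornFn p i) = windS s (cornFn p (i + 1)) := by
  fin_cases i
  · exact windNH_of_not_vert (by simpa [cornFn] using h2)
  · exact windNV_of_not_vert (by simpa [cornFn] using h2)
  · exact (windNH_of_not_vert (j := (p.1, p.2+1)) (by simpa [cornFn] using h1)).symm
  · exact (windNV_of_not_vert (j := p) (by simpa [cornFn] using h1)).symm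

lemma Fs_vert {s : Sock} {j : Sq} (h : j ∈ sockVerts s) : Fs s j = 0 := by
  unfold Fs; rw [if_pos (Or.inl h)]

lemma pairCancel (s : Sock) (p : Sq) (i : Fin 4)
    (h1 : cornFn p i ∉ sockVerts s) (h2 : cornFn p (i + 1) ∉ sockVerts s) :
    Fs s (cornFn p i) + Fs s (cornFn p (i + 1)) = 0 := by
  have hw := adjCorner s p i h1 h2
  unfold Fs
  rw [hw]
  by_cases h0 : windS s (cornFn p (i + 1)) = 0
  · rw [if_pos (Or.inr h0), if_pos (Or.inr h0), add_zero]
  · have c1 : ¬(cornFn p i ∈ sockVerts s ∨ windS s (cornFn p (i + 1)) = 0) := by tauto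
    have c2 : ¬(cornFn p (i + 1) ∈ sockVerts s ∨ windS s (cornFn p (i + 1)) = 0) := by tauto
    rw [if_neg c1, if_neg c2]
    have hb := corn_black_alt p i
    by_cases hbi : sqBlack (cornFn p i)
    · have hb2 : ¬ sqBlack (cornFn p (i + 1)) := hb.1 hbi
      rw [if_pos hbi, if_neg hb2]; ring
    · have hb2 : sqBlack (cornFn p (i + 1)) := by tauto
      rw [if_neg hbi, if_pos hb2]; ring

-- ======== edgeWind closed forms and the square sum ========

lemma edgeWind_vertU (j : Sq) (x y : ℤ) :
    edgeWind j (x, y) (x, y + 1) = if j.1 < x ∧ j.2 = y then 1 else 0 := by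
  unfold edgeWind; split_ifs <;> omega

lemma edgeWind_vertD (j : Sq) (x y : ℤ) :
    edgeWind j (x, y + 1) (x, y) = if j.1 < x ∧ j.2 = y then -1 else 0 := by
  unfold edgeWind; split_ifs <;> omega

lemma edgeWind_horiz (j : Sq) {x x' : ℤ} (y : ℤ) (h : x ≠ x') :
    edgeWind j (x, y) (x', y) = 0 := by
  unfold edgeWind
  rw [if_neg (by simp; omega), if_neg (by simp; omega)]

lemma unitSq_eq_image (p : Sq) (o : Bool) :
    unitSq p o = Finset.univ.image (outeFn p (if o then 1 else 3)) := by
  ext e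
  rw [mem_unitSq_iff]
  simp [eq_comm]

lemma sum_sq_wind (p : Sq) (o : Bool) (j : Sq) :
    ∑ e ∈ unitSq p o, edgeWind j e.1 e.2
      = if j = p then (if o then 1 else -1) else 0 := by
  obtain ⟨p1, p2⟩ := p
  obtain ⟨j1, j2⟩ := j
  rw [unitSq_eq_image, Finset.sum_image (fun i _ i' _ h => oute_inj _ _ h)]
  rw [Fin.sum_univ_four]
  have mtx : ∀ i : Fin 4, cornFn (p1, p2) i =
      [((p1, p2) : Sq), (p1 + 1, p2), (p1 + 1, p2 + 1), (p1, p2 + 1)].get i := by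
    intro i; fin_cases i <;> rfl
  cases o
  · simp only [Bool.false_eq_true, if_false, outeFn, show ((0:Fin 4)+1 = 1) by decide, show ((1:Fin 4)+1 = 2) by decide, show ((2:Fin 4)+1 = 3) by decide, show ((3:Fin 4)+1 = 0) by decide, show ((0:Fin 4)+3 = 3) by decide, show ((1:Fin 4)+3 = 0) by decide, show ((2:Fin 4)+3 = 1) by decide, show ((3:Fin 4)+3 = 2) by decide, mtx]
    simp only [List.get]
    rw [edgeWind_vertU, edgeWind_horiz _ _ (show (p1:ℤ) + 1 ≠ p1 by omega),
      edgeWind_vertD, edgeWind_horiz _ _ (show (p1:ℤ) ≠ p1 + 1 by omega)]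
    simp only [Prod.mk.injEq]
    split_ifs <;> omega
  · simp only [if_true, outeFn, show ((0:Fin 4)+1 = 1) by decide, show ((1:Fin 4)+1 = 2) by decide, show ((2:Fin 4)+1 = 3) by decide, show ((3:Fin 4)+1 = 0) by decide, show ((0:Fin 4)+3 = 3) by decide, show ((1:Fin 4)+3 = 0) by decide, show ((2:Fin 4)+3 = 1) by decide, show ((3:Fin 4)+3 = 2) by decide, mtx]
    simp only [List.get]
    rw [edgeWind_horiz _ _ (show (p1:ℤ) ≠ p1 + 1 by omega), edgeWind_vertU,
      edgeWind_horiz _ _ (show (p1:ℤ) + 1 ≠ p1 by omega), edgeWind_vertD]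
    simp only [Prod.mk.injEq]
    split_ifs <;> omega


-- ======== SqMove consequences ========

lemma mem_E1 {s₀ s₁ : Sock} {sq : Finset DEdge}
    (hmv : SqMove (sockEdges s₀) (sockEdges s₁) sq) (e : DEdge) :
    e ∈ sockEdges s₁ ↔
      (e ∈ sockEdges s₀ ∧ rev e ∉ sq) ∨ (e ∈ sq ∧ rev e ∉ sockEdges s₀) := by
  rw [hmv]
  simp only [Finset.mem_union, Finset.mem_sdiff, Finset.mem_filter, Finset.mem_image]
  constructor
  · rintro (⟨he, hni⟩ | ⟨hesq, hre⟩)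
    · exact Or.inl ⟨he, fun hrs => hni ⟨rev e, hrs, rfl⟩⟩
    · exact Or.inr ⟨hesq, hre⟩
  · rintro (⟨he, hns⟩ | h)
    · refine Or.inl ⟨he, ?_⟩
      rintro ⟨a, ha, rfl⟩
      exact hns (by rwa [rev_rev])
    · exact Or.inr h

lemma windS_SqMove {s₀ s₁ : Sock} {p : Sq} {o : Bool}
    (hmv : SqMove (sockEdges s₀) (sockEdges s₁) (unitSq p o))
    (hK : ∀ e ∈ unitSq p o, e ∉ sockEdges s₀) (j : Sq) :
    windS s₁ j = windS s₀ j + (if j = p then (if o then 1 else -1) else 0) := by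
  rw [← sum_sq_wind p o j]
  unfold windS
  rw [hmv]
  have hdisj : Disjoint (sockEdges s₀ \ (unitSq p o).image rev)
      ((unitSq p o).filter fun e => rev e ∉ sockEdges s₀) := by
    rw [Finset.disjoint_left]
    intro e he hf
    rw [Finset.mem_filter] at hf
    exact hK e hf.1 (Finset.mem_sdiff.1 he).1
  rw [Finset.sum_union hdisj]
  have h2 : sockEdges s₀ \ (unitSq p o).image rev
      = sockEdges s₀ \ (sockEdges s₀ ∩ (unitSq p o).image rev) := by
    rw [Finset.sdiff_inter_self_left]
  rw [h2, Finset.sum_sdiff_eq_sub Finset.inter_subset_left]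
  have h3 : sockEdges s₀ ∩ (unitSq p o).image rev
      = ((unitSq p o).filter fun f => rev f ∈ sockEdges s₀).image rev := by
    ext e
    simp only [Finset.mem_inter, Finset.mem_image, Finset.mem_filter]
    constructor
    · rintro ⟨he, a, ha, rfl⟩
      exact ⟨a, ⟨ha, he⟩, rfl⟩
    · rintro ⟨a, ⟨ha, hra⟩, rfl⟩
      exact ⟨hra, a, ha, rfl⟩
  rw [h3, Finset.sum_image (fun a _ b _ h => by
    have := congrArg rev h; rwa [rev_rev, rev_rev] at this)]
  have h4 : ∑ f ∈ (unitSq p o).filter (fun f => rev f ∈ sockEdges s₀),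
      edgeWind j (rev f).1 (rev f).2
      = - ∑ f ∈ (unitSq p o).filter (fun f => rev f ∈ sockEdges s₀),
          edgeWind j f.1 f.2 := by
    rw [← Finset.sum_neg_distrib]
    refine Finset.sum_congr rfl fun f _ => ?_
    show edgeWind j f.2 f.1 = - edgeWind j f.1 f.2
    exact edgeWind_rev j f.1 f.2
  rw [h4, sub_neg_eq_add, add_assoc]
  congr 1
  exact Finset.sum_filter_add_sum_filter_not _ _ _

lemma K_dichotomy {s₀ s₁ : Sock} {p : Sq} {o : Bool}
    (hmv : SqMove (sockEdges s₀) (sockEdges s₁) (unitSq p o)) :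
    (∀ e ∈ unitSq p o, e ∉ sockEdges s₀) ∨ sockEdges s₁ = sockEdges s₀ := by
  by_cases hK : ∀ e ∈ unitSq p o, e ∉ sockEdges s₀
  · exact Or.inl hK
  right
  push_neg at hK
  obtain ⟨e, hesq, heE⟩ := hK
  set d : Fin 4 := if o then 1 else 3 with hdd
  have hd13 : d = 1 ∨ d = 3 := by
    rw [hdd]; cases o
    · exact Or.inr (by simp)
    · exact Or.inl (by simp)
  obtain ⟨i₀, rfl⟩ := (mem_unitSq_iff p o e).1 hesq
  -- the key step: if an edge of the square is present, so is its square-predecessor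
  have step : ∀ i : Fin 4, outeFn p d i ∈ sockEdges s₀ →
      outeFn p d (i - d) ∈ sockEdges s₀ := by
    intro i hKi
    have hRi : rev (outeFn p d i) ∉ sockEdges s₀ := not_rev_mem hKi
    have hvi : cornFn p i ∈ sockVerts s₀ := edge_fst_mem_verts hKi
    obtain ⟨h₀, h₀E, h₀2⟩ := exists_in hvi
    have h₀E1 : h₀ ∈ sockEdges s₁ := by
      refine (mem_E1 hmv h₀).2 (Or.inl ⟨h₀E, ?_⟩)
      intro hrs
      obtain ⟨k, hk⟩ := (mem_unitSq_iff p o (rev h₀)).1 hrs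
      have hk1 : cornFn p k = cornFn p i := by
        have := congrArg Prod.fst hk
        simp only [outeFn] at this
        rw [← this]
        exact h₀2
      have : k = i := corn_inj p hk1
      subst this
      apply hRi
      have := congrArg rev hk
      rw [rev_rev] at this
      rwa [← this]
    by_cases hKd : outeFn p d (i - d) ∈ sockEdges s₀
    · exact hKd
    exfalso
    by_cases hRd : rev (outeFn p d (i - d)) ∈ sockEdges s₀
    · -- two out-edges at corn i in E₀
      have hfst : (outeFn p d i).1 = (rev (outeFn p d (i - d))).1 := by
        show cornFn p i = cornFn p (i - d + d)
        rw [sub_add_cancel]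
      have := out_unique hKi hRd hfst
      have : rev (outeFn p d i) = outeFn p d (i - d) := by
        rw [this, rev_rev]
      exact oute_no_doubled (by rcases hd13 with h | h <;> rw [h] <;> decide) this
    · -- oute (i-d) would be a second in-edge at corn i in E₁
      have houteE1 : outeFn p d (i - d) ∈ sockEdges s₁ := by
        refine (mem_E1 hmv _).2 (Or.inr ⟨(mem_unitSq_iff p o _).2 ⟨i - d, rfl⟩, hRd⟩)
      have hsnd : h₀.2 = (outeFn p d (i - d)).2 := by
        show h₀.2 = cornFn p (i - d + d)
        rw [sub_add_cancel, h₀2]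
      have := in_unique h₀E1 houteE1 hsnd
      rw [← this] at hKd
      exact hKd h₀E
  have k1 := step i₀ heE
  have k2 := step _ k1
  have k3 := step _ k2
  have hcases : ∀ i j : Fin 4, i = j ∨ i = j - d ∨ i = j - d - d ∨ i = j - d - d - d := by
    rcases hd13 with h | h <;> rw [h] <;> decide
  have hall : ∀ i : Fin 4, outeFn p d i ∈ sockEdges s₀ := by
    intro i
    rcases hcases i i₀ with rfl | rfl | rfl | rfl
    exacts [heE, k1, k2, k3]
  have hRnone : ∀ f ∈ unitSq p o, rev f ∉ sockEdges s₀ := by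
    intro f hf
    obtain ⟨i, rfl⟩ := (mem_unitSq_iff p o f).1 hf
    exact not_rev_mem (hall i)
  rw [hmv]
  have hdisj : Disjoint (sockEdges s₀) ((unitSq p o).image rev) := by
    rw [Finset.disjoint_right]
    rintro f hfm
    obtain ⟨a, ha, rfl⟩ := Finset.mem_image.1 hfm
    exact hRnone a ha
  rw [Finset.sdiff_eq_self_of_disjoint hdisj]
  have hfilt : (unitSq p o).filter (fun e => rev e ∉ sockEdges s₀) = unitSq p o :=
    Finset.filter_true_of_mem (fun f hf => hRnone f hf)
  rw [hfilt]
  apply Finset.union_eq_left.2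
  intro f hf
  obtain ⟨i, rfl⟩ := (mem_unitSq_iff p o f).1 hf
  exact hall i


-- ======== corner status criteria ========

lemma oute_mem_sq {p : Sq} {o : Bool} {d : Fin 4} (hdo : d = (if o then 1 else 3))
    (i : Fin 4) : outeFn p d i ∈ unitSq p o := by
  subst hdo
  exact (mem_unitSq_iff p o _).2 ⟨i, rfl⟩

lemma V0_crit {s₀ s₁ : Sock} {p : Sq} {o : Bool} {d : Fin 4} (hdo : d = (if o then 1 else 3))
    (hmv : SqMove (sockEdges s₀) (sockEdges s₁) (unitSq p o))
    (hK : ∀ e ∈ unitSq p o, e ∉ sockEdges s₀) (i : Fin 4) :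
    cornFn p i ∈ sockVerts s₀ ↔
      (rev (outeFn p d i) ∈ sockEdges s₀ ∨ rev (outeFn p d (i - d)) ∈ sockEdges s₀) := by
  constructor
  · intro hv
    by_contra hc
    push_neg at hc
    obtain ⟨hRi, hRd⟩ := hc
    obtain ⟨g, hgE, hg1⟩ := exists_out hv
    have hgE1 : g ∈ sockEdges s₁ := by
      refine (mem_E1 hmv g).2 (Or.inl ⟨hgE, ?_⟩)
      intro hrs
      rw [mem_unitSq_iff, ← hdo] at hrs
      obtain ⟨k, hk⟩ := hrs
      have h2 : cornFn p (k + d) = cornFn p i := by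
        have := congrArg Prod.snd hk
        simp only [outeFn, rev] at this
        rw [← this]
        exact hg1
      have hki : k = i - d := eq_sub_of_add_eq (corn_inj p h2)
      apply hRd
      rw [← hki]
      have := congrArg rev hk
      rw [rev_rev] at this
      rwa [← this]
    have houte : outeFn p d i ∈ sockEdges s₁ :=
      (mem_E1 hmv _).2 (Or.inr ⟨oute_mem_sq hdo i, hRi⟩)
    have hgo : g = outeFn p d i := out_unique hgE1 houte (by rw [hg1]; rfl)
    exact hK _ (oute_mem_sq hdo i) (hgo ▸ hgE)
  · rintro (h | h)
    · exact edge_snd_mem_verts h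
    · have := edge_fst_mem_verts h
      show cornFn p i ∈ sockVerts s₀
      rw [← sub_add_cancel i d]
      exact this

lemma V1_crit {s₀ s₁ : Sock} {p : Sq} {o : Bool} {d : Fin 4} (hdo : d = (if o then 1 else 3))
    (hmv : SqMove (sockEdges s₀) (sockEdges s₁) (unitSq p o))
    (hK : ∀ e ∈ unitSq p o, e ∉ sockEdges s₀) (i : Fin 4) :
    cornFn p i ∈ sockVerts s₁ ↔
      (rev (outeFn p d i) ∉ sockEdges s₀ ∨ rev (outeFn p d (i - d)) ∉ sockEdges s₀) := by
  constructor
  · intro hv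
    by_contra hc
    push_neg at hc
    obtain ⟨hRi, hRd⟩ := hc
    obtain ⟨g, hgE1, hg1⟩ := exists_out hv
    rcases (mem_E1 hmv g).1 hgE1 with ⟨hgE0, hgrs⟩ | ⟨hgsq, hgr⟩
    · have hfst : g.1 = (rev (outeFn p d (i - d))).1 := by
        show g.1 = cornFn p (i - d + d)
        rw [sub_add_cancel]
        exact hg1
      have hgeq := out_unique hgE0 hRd hfst
      apply hgrs
      rw [hgeq, rev_rev]
      exact oute_mem_sq hdo _
    · rw [mem_unitSq_iff, ← hdo] at hgsq
      obtain ⟨k, rfl⟩ := hgsq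
      have : k = i := corn_inj p hg1
      subst this
      exact hgr hRi
  · rintro (h | h)
    · exact edge_fst_mem_verts ((mem_E1 hmv _).2 (Or.inr ⟨oute_mem_sq hdo i, h⟩))
    · have := edge_snd_mem_verts ((mem_E1 hmv _).2 (Or.inr ⟨oute_mem_sq hdo (i - d), h⟩))
      show cornFn p i ∈ sockVerts s₁
      rw [← sub_add_cancel i d]
      exact this

lemma V_offcorner {s₀ s₁ : Sock} {p : Sq} {o : Bool}
    (hmv : SqMove (sockEdges s₀) (sockEdges s₁) (unitSq p o))
    (v : Sq) (hv : v ∉ cornSet p) : (v ∈ sockVerts s₁ ↔ v ∈ sockVerts s₀) := by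
  constructor
  · intro h
    obtain ⟨e, heE, he1⟩ := exists_out h
    rcases (mem_E1 hmv e).1 heE with ⟨heE0, _⟩ | ⟨hesq, _⟩
    · exact he1 ▸ edge_fst_mem_verts heE0
    · exfalso
      rw [mem_unitSq_iff] at hesq
      obtain ⟨i, rfl⟩ := hesq
      exact hv (mem_cornSet.2 ⟨i, he1⟩)
  · intro h
    obtain ⟨e, heE, he1⟩ := exists_out h
    have heE1 : e ∈ sockEdges s₁ := by
      refine (mem_E1 hmv e).2 (Or.inl ⟨heE, ?_⟩)
      intro hrs
      rw [mem_unitSq_iff] at hrs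
      obtain ⟨i, hk⟩ := hrs
      apply hv
      refine mem_cornSet.2 ⟨i + (if o then 1 else 3), ?_⟩
      have := congrArg Prod.snd hk
      simp only [outeFn, rev] at this
      rw [← this]
      exact he1
    exact he1 ▸ edge_fst_mem_verts heE1

lemma pat_of_not_twoAdj {s₀ : Sock} {p : Sq} {o : Bool} {d : Fin 4}
    (hdo : d = (if o then 1 else 3))
    (hnot : ¬ TwoAdjRemoved (sockEdges s₀) (unitSq p o)) (i : Fin 4) :
    ¬((rev (outeFn p d i) ∈ sockEdges s₀) ∧ (rev (outeFn p d (i + d)) ∈ sockEdges s₀) ∧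
      ¬(rev (outeFn p d (i + d + d)) ∈ sockEdges s₀) ∧
      ¬(rev (outeFn p d (i + d + d + d)) ∈ sockEdges s₀)) := by
  have hd13 : d = 1 ∨ d = 3 := by
    rw [hdo]; cases o
    · exact Or.inr (by simp)
    · exact Or.inl (by simp)
  have hcases : ∀ k i : Fin 4, k = i ∨ k = i + d ∨ k = i + d + d ∨ k = i + d + d + d := by
    rcases hd13 with h | h <;> rw [h] <;> decide
  rintro ⟨h1, h2, h3, h4⟩
  apply hnot
  refine ⟨outeFn p d i, oute_mem_sq hdo i, outeFn p d (i + d), oute_mem_sq hdo (i + d),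
    ?_, rfl, h1, h2, ?_⟩
  · intro heq
    have hii : i = i + d := oute_inj p d heq
    have hd0 : d = 0 := by
      have := left_eq_add.1 hii
      exact this
    rcases hd13 with h | h <;> rw [h] at hd0 <;> exact absurd hd0 (by decide)
  · intro g hg hrg
    rw [mem_unitSq_iff, ← hdo] at hg
    obtain ⟨k, rfl⟩ := hg
    rcases hcases k i with rfl | rfl | rfl | rfl
    · exact Or.inl rfl
    · exact Or.inr rfl
    · exact absurd hrg h3
    · exact absurd hrg h4


-- ======== the core cancellation lemma ========

set_option maxHeartbeats 3000000 in
lemma core (s₀ s₁ : Sock) (p : Sq) (d : Fin 4) (R : Fin 4 → Prop) (hd : d = 1 ∨ d = 3)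
    (hwind : ∀ j, j ≠ p → windS s₁ j = windS s₀ j)
    (hVd : ∀ v, v ∉ cornSet p → (v ∈ sockVerts s₁ ↔ v ∈ sockVerts s₀))
    (hV0 : ∀ i, cornFn p i ∈ sockVerts s₀ ↔ (R i ∨ R (i - d)))
    (hV1 : ∀ i, cornFn p i ∈ sockVerts s₁ ↔ (¬ R i ∨ ¬ R (i - d)))
    (hpat : ∀ i, ¬(R i ∧ R (i + d) ∧ ¬ R (i + d + d) ∧ ¬ R (i + d + d + d))) :
    Psock s₀ = Psock s₁ := by
  have hp0 : cornFn p 0 = p := by simp [cornFn]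
  rw [Psock_eq_sum s₀ (sockBox s₀ ∪ sockBox s₁ ∪ cornSet p)
        (fun x hx => Finset.mem_union_left _ (Finset.mem_union_left _ hx)),
      Psock_eq_sum s₁ (sockBox s₀ ∪ sockBox s₁ ∪ cornSet p)
        (fun x hx => Finset.mem_union_left _ (Finset.mem_union_right _ hx))]
  rw [← sub_eq_zero, ← Finset.sum_sub_distrib]
  have hzero : ∀ j ∈ sockBox s₀ ∪ sockBox s₁ ∪ cornSet p, j ∉ cornSet p →
      Fs s₀ j - Fs s₁ j = 0 := by
    intro j _ hjc
    have hjp : j ≠ p := by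
      intro hh
      exact hjc (by rw [hh]; exact mem_cornSet.2 ⟨0, hp0⟩)
    have hw : windS s₁ j = windS s₀ j := hwind j hjp
    have hv := hVd j hjc
    have : Fs s₀ j = Fs s₁ j := by
      simp only [Fs, hw, hv]
    rw [this, sub_self]
  rw [← Finset.sum_subset (fun x hx => Finset.mem_union_right _ hx) hzero]
  show ∑ j ∈ Finset.image (cornFn p) Finset.univ, (Fs s₀ j - Fs s₁ j) = 0
  rw [Finset.sum_image (fun i _ i' _ h => corn_inj p h), Fin.sum_univ_four]
  have hstab : ∀ i, cornFn p i ∈ sockVerts s₀ → cornFn p i ∈ sockVerts s₁ →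
      Fs s₀ (cornFn p i) - Fs s₁ (cornFn p i) = 0 := by
    intro i h0 h1
    rw [Fs_vert h0, Fs_vert h1, sub_zero]
  have hlost : ∀ a b : Fin 4, b = a + 1 →
      cornFn p a ∉ sockVerts s₀ → cornFn p b ∉ sockVerts s₀ →
      cornFn p a ∈ sockVerts s₁ → cornFn p b ∈ sockVerts s₁ →
      (Fs s₀ (cornFn p a) - Fs s₁ (cornFn p a))
        + (Fs s₀ (cornFn p b) - Fs s₁ (cornFn p b)) = 0 := by
    intro a b hb h0a h0b h1a h1b
    subst hb
    have hp := pairCancel s₀ p a h0a h0b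
    rw [Fs_vert h1a, Fs_vert h1b]
    linear_combination hp
  have hgain : ∀ a b : Fin 4, b = a + 1 →
      cornFn p a ∈ sockVerts s₀ → cornFn p b ∈ sockVerts s₀ →
      cornFn p a ∉ sockVerts s₁ → cornFn p b ∉ sockVerts s₁ →
      (Fs s₀ (cornFn p a) - Fs s₁ (cornFn p a))
        + (Fs s₀ (cornFn p b) - Fs s₁ (cornFn p b)) = 0 := by
    intro a b hb h0a h0b h1a h1b
    subst hb
    have hp := pairCancel s₁ p a h1a h1b
    rw [Fs_vert h0a, Fs_vert h0b]
    linear_combination -hp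
  rcases hd with rfl | rfl

  · have sb0 : (0:Fin 4) - 1 = 3 := by decide
    have a0 : (0:Fin 4) + 1 = 1 := by decide
    have sb1 : (1:Fin 4) - 1 = 0 := by decide
    have a1 : (1:Fin 4) + 1 = 2 := by decide
    have sb2 : (2:Fin 4) - 1 = 1 := by decide
    have a2 : (2:Fin 4) + 1 = 3 := by decide
    have sb3 : (3:Fin 4) - 1 = 2 := by decide
    have a3 : (3:Fin 4) + 1 = 0 := by decide
    rcases Classical.em (R 0) with hR0 | hR0 <;> rcases Classical.em (R 1) with hR1 | hR1 <;> rcases Classical.em (R 2) with hR2 | hR2 <;> rcases Classical.em (R 3) with hR3 | hR3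
    · have hv0_0 : cornFn p 0 ∈ sockVerts s₀ := by rw [hV0, sb0]; exact Or.inl hR0
      have hv1_0 : cornFn p 0 ∉ sockVerts s₁ := by rw [hV1, sb0]; exact fun h => h.elim (fun x => x hR0) (fun x => x hR3)
      have hv0_1 : cornFn p 1 ∈ sockVerts s₀ := by rw [hV0, sb1]; exact Or.inl hR1
      have hv1_1 : cornFn p 1 ∉ sockVerts s₁ := by rw [hV1, sb1]; exact fun h => h.elim (fun x => x hR1) (fun x => x hR0)
      have hv0_2 : cornFn p 2 ∈ sockVerts s₀ := by rw [hV0, sb2]; exact Or.inl hR2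
      have hv1_2 : cornFn p 2 ∉ sockVerts s₁ := by rw [hV1, sb2]; exact fun h => h.elim (fun x => x hR2) (fun x => x hR1)
      have hv0_3 : cornFn p 3 ∈ sockVerts s₀ := by rw [hV0, sb3]; exact Or.inl hR3
      have hv1_3 : cornFn p 3 ∉ sockVerts s₁ := by rw [hV1, sb3]; exact fun h => h.elim (fun x => x hR3) (fun x => x hR2)
      have hgp0 := hgain 0 1 (by decide) hv0_0 hv0_1 hv1_0 hv1_1
      have hgp1 := hgain 2 3 (by decide) hv0_2 hv0_3 hv1_2 hv1_3
      linear_combination hgp0 + hgp1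
    · have hv0_0 : cornFn p 0 ∈ sockVerts s₀ := by rw [hV0, sb0]; exact Or.inl hR0
      have hv1_0 : cornFn p 0 ∈ sockVerts s₁ := by rw [hV1, sb0]; exact Or.inr hR3
      have hv0_1 : cornFn p 1 ∈ sockVerts s₀ := by rw [hV0, sb1]; exact Or.inl hR1
      have hv1_1 : cornFn p 1 ∉ sockVerts s₁ := by rw [hV1, sb1]; exact fun h => h.elim (fun x => x hR1) (fun x => x hR0)
      have hv0_2 : cornFn p 2 ∈ sockVerts s₀ := by rw [hV0, sb2]; exact Or.inl hR2
      have hv1_2 : cornFn p 2 ∉ sockVerts s₁ := by rw [hV1, sb2]; exact fun h => h.elim (fun x => x hR2) (fun x => x hR1)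
      have hv0_3 : cornFn p 3 ∈ sockVerts s₀ := by rw [hV0, sb3]; exact Or.inr hR2
      have hv1_3 : cornFn p 3 ∈ sockVerts s₁ := by rw [hV1, sb3]; exact Or.inl hR3
      have hgp0 := hgain 1 2 (by decide) hv0_1 hv0_2 hv1_1 hv1_2
      have hst0 := hstab 0 hv0_0 hv1_0
      have hst3 := hstab 3 hv0_3 hv1_3
      linear_combination hgp0 + hst0 + hst3
    · have hv0_0 : cornFn p 0 ∈ sockVerts s₀ := by rw [hV0, sb0]; exact Or.inl hR0
      have hv1_0 : cornFn p 0 ∉ sockVerts s₁ := by rw [hV1, sb0]; exact fun h => h.elim (fun x => x hR0) (fun x => x hR3)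
      have hv0_1 : cornFn p 1 ∈ sockVerts s₀ := by rw [hV0, sb1]; exact Or.inl hR1
      have hv1_1 : cornFn p 1 ∉ sockVerts s₁ := by rw [hV1, sb1]; exact fun h => h.elim (fun x => x hR1) (fun x => x hR0)
      have hv0_2 : cornFn p 2 ∈ sockVerts s₀ := by rw [hV0, sb2]; exact Or.inr hR1
      have hv1_2 : cornFn p 2 ∈ sockVerts s₁ := by rw [hV1, sb2]; exact Or.inl hR2
      have hv0_3 : cornFn p 3 ∈ sockVerts s₀ := by rw [hV0, sb3]; exact Or.inl hR3
      have hv1_3 : cornFn p 3 ∈ sockVerts s₁ := by rw [hV1, sb3]; exact Or.inr hR2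
      have hgp0 := hgain 0 1 (by decide) hv0_0 hv0_1 hv1_0 hv1_1
      have hst2 := hstab 2 hv0_2 hv1_2
      have hst3 := hstab 3 hv0_3 hv1_3
      linear_combination hgp0 + hst2 + hst3
    · exfalso
      apply hpat 0
      refine ⟨?_, ?_, ?_, ?_⟩ <;> first | assumption | (simp only [a0, a1, a2, a3]; assumption)
    · have hv0_0 : cornFn p 0 ∈ sockVerts s₀ := by rw [hV0, sb0]; exact Or.inl hR0
      have hv1_0 : cornFn p 0 ∉ sockVerts s₁ := by rw [hV1, sb0]; exact fun h => h.elim (fun x => x hR0) (fun x => x hR3)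
      have hv0_1 : cornFn p 1 ∈ sockVerts s₀ := by rw [hV0, sb1]; exact Or.inr hR0
      have hv1_1 : cornFn p 1 ∈ sockVerts s₁ := by rw [hV1, sb1]; exact Or.inl hR1
      have hv0_2 : cornFn p 2 ∈ sockVerts s₀ := by rw [hV0, sb2]; exact Or.inl hR2
      have hv1_2 : cornFn p 2 ∈ sockVerts s₁ := by rw [hV1, sb2]; exact Or.inr hR1
      have hv0_3 : cornFn p 3 ∈ sockVerts s₀ := by rw [hV0, sb3]; exact Or.inl hR3
      have hv1_3 : cornFn p 3 ∉ sockVerts s₁ := by rw [hV1, sb3]; exact fun h => h.elim (fun x => x hR3) (fun x => x hR2)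
      have hgp0 := hgain 3 0 (by decide) hv0_3 hv0_0 hv1_3 hv1_0
      have hst1 := hstab 1 hv0_1 hv1_1
      have hst2 := hstab 2 hv0_2 hv1_2
      linear_combination hgp0 + hst1 + hst2
    · have hv0_0 : cornFn p 0 ∈ sockVerts s₀ := by rw [hV0, sb0]; exact Or.inl hR0
      have hv1_0 : cornFn p 0 ∈ sockVerts s₁ := by rw [hV1, sb0]; exact Or.inr hR3
      have hv0_1 : cornFn p 1 ∈ sockVerts s₀ := by rw [hV0, sb1]; exact Or.inr hR0
      have hv1_1 : cornFn p 1 ∈ sockVerts s₁ := by rw [hV1, sb1]; exact Or.inl hR1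
      have hv0_2 : cornFn p 2 ∈ sockVerts s₀ := by rw [hV0, sb2]; exact Or.inl hR2
      have hv1_2 : cornFn p 2 ∈ sockVerts s₁ := by rw [hV1, sb2]; exact Or.inr hR1
      have hv0_3 : cornFn p 3 ∈ sockVerts s₀ := by rw [hV0, sb3]; exact Or.inr hR2
      have hv1_3 : cornFn p 3 ∈ sockVerts s₁ := by rw [hV1, sb3]; exact Or.inl hR3
      have hst0 := hstab 0 hv0_0 hv1_0
      have hst1 := hstab 1 hv0_1 hv1_1
      have hst2 := hstab 2 hv0_2 hv1_2
      have hst3 := hstab 3 hv0_3 hv1_3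
      linear_combination hst0 + hst1 + hst2 + hst3
    · exfalso
      apply hpat 3
      refine ⟨?_, ?_, ?_, ?_⟩ <;> first | assumption | (simp only [a0, a1, a2, a3]; assumption)
    · have hv0_0 : cornFn p 0 ∈ sockVerts s₀ := by rw [hV0, sb0]; exact Or.inl hR0
      have hv1_0 : cornFn p 0 ∈ sockVerts s₁ := by rw [hV1, sb0]; exact Or.inr hR3
      have hv0_1 : cornFn p 1 ∈ sockVerts s₀ := by rw [hV0, sb1]; exact Or.inr hR0
      have hv1_1 : cornFn p 1 ∈ sockVerts s₁ := by rw [hV1, sb1]; exact Or.inl hR1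
      have hv0_2 : cornFn p 2 ∉ sockVerts s₀ := by rw [hV0, sb2]; exact fun h => h.elim hR2 hR1
      have hv1_2 : cornFn p 2 ∈ sockVerts s₁ := by rw [hV1, sb2]; exact Or.inl hR2
      have hv0_3 : cornFn p 3 ∉ sockVerts s₀ := by rw [hV0, sb3]; exact fun h => h.elim hR3 hR2
      have hv1_3 : cornFn p 3 ∈ sockVerts s₁ := by rw [hV1, sb3]; exact Or.inl hR3
      have hlp0 := hlost 2 3 (by decide) hv0_2 hv0_3 hv1_2 hv1_3
      have hst0 := hstab 0 hv0_0 hv1_0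
      have hst1 := hstab 1 hv0_1 hv1_1
      linear_combination hlp0 + hst0 + hst1
    · have hv0_0 : cornFn p 0 ∈ sockVerts s₀ := by rw [hV0, sb0]; exact Or.inr hR3
      have hv1_0 : cornFn p 0 ∈ sockVerts s₁ := by rw [hV1, sb0]; exact Or.inl hR0
      have hv0_1 : cornFn p 1 ∈ sockVerts s₀ := by rw [hV0, sb1]; exact Or.inl hR1
      have hv1_1 : cornFn p 1 ∈ sockVerts s₁ := by rw [hV1, sb1]; exact Or.inr hR0
      have hv0_2 : cornFn p 2 ∈ sockVerts s₀ := by rw [hV0, sb2]; exact Or.inl hR2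
      have hv1_2 : cornFn p 2 ∉ sockVerts s₁ := by rw [hV1, sb2]; exact fun h => h.elim (fun x => x hR2) (fun x => x hR1)
      have hv0_3 : cornFn p 3 ∈ sockVerts s₀ := by rw [hV0, sb3]; exact Or.inl hR3
      have hv1_3 : cornFn p 3 ∉ sockVerts s₁ := by rw [hV1, sb3]; exact fun h => h.elim (fun x => x hR3) (fun x => x hR2)
      have hgp0 := hgain 2 3 (by decide) hv0_2 hv0_3 hv1_2 hv1_3
      have hst0 := hstab 0 hv0_0 hv1_0
      have hst1 := hstab 1 hv0_1 hv1_1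
      linear_combination hgp0 + hst0 + hst1
    · exfalso
      apply hpat 1
      refine ⟨?_, ?_, ?_, ?_⟩ <;> first | assumption | (simp only [a0, a1, a2, a3]; assumption)
    · have hv0_0 : cornFn p 0 ∈ sockVerts s₀ := by rw [hV0, sb0]; exact Or.inr hR3
      have hv1_0 : cornFn p 0 ∈ sockVerts s₁ := by rw [hV1, sb0]; exact Or.inl hR0
      have hv0_1 : cornFn p 1 ∈ sockVerts s₀ := by rw [hV0, sb1]; exact Or.inl hR1
      have hv1_1 : cornFn p 1 ∈ sockVerts s₁ := by rw [hV1, sb1]; exact Or.inr hR0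
      have hv0_2 : cornFn p 2 ∈ sockVerts s₀ := by rw [hV0, sb2]; exact Or.inr hR1
      have hv1_2 : cornFn p 2 ∈ sockVerts s₁ := by rw [hV1, sb2]; exact Or.inl hR2
      have hv0_3 : cornFn p 3 ∈ sockVerts s₀ := by rw [hV0, sb3]; exact Or.inl hR3
      have hv1_3 : cornFn p 3 ∈ sockVerts s₁ := by rw [hV1, sb3]; exact Or.inr hR2
      have hst0 := hstab 0 hv0_0 hv1_0
      have hst1 := hstab 1 hv0_1 hv1_1
      have hst2 := hstab 2 hv0_2 hv1_2
      have hst3 := hstab 3 hv0_3 hv1_3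
      linear_combination hst0 + hst1 + hst2 + hst3
    · have hv0_0 : cornFn p 0 ∉ sockVerts s₀ := by rw [hV0, sb0]; exact fun h => h.elim hR0 hR3
      have hv1_0 : cornFn p 0 ∈ sockVerts s₁ := by rw [hV1, sb0]; exact Or.inl hR0
      have hv0_1 : cornFn p 1 ∈ sockVerts s₀ := by rw [hV0, sb1]; exact Or.inl hR1
      have hv1_1 : cornFn p 1 ∈ sockVerts s₁ := by rw [hV1, sb1]; exact Or.inr hR0
      have hv0_2 : cornFn p 2 ∈ sockVerts s₀ := by rw [hV0, sb2]; exact Or.inr hR1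
      have hv1_2 : cornFn p 2 ∈ sockVerts s₁ := by rw [hV1, sb2]; exact Or.inl hR2
      have hv0_3 : cornFn p 3 ∉ sockVerts s₀ := by rw [hV0, sb3]; exact fun h => h.elim hR3 hR2
      have hv1_3 : cornFn p 3 ∈ sockVerts s₁ := by rw [hV1, sb3]; exact Or.inl hR3
      have hlp0 := hlost 3 0 (by decide) hv0_3 hv0_0 hv1_3 hv1_0
      have hst1 := hstab 1 hv0_1 hv1_1
      have hst2 := hstab 2 hv0_2 hv1_2
      linear_combination hlp0 + hst1 + hst2
    · exfalso
      apply hpat 2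
      refine ⟨?_, ?_, ?_, ?_⟩ <;> first | assumption | (simp only [a0, a1, a2, a3]; assumption)
    · have hv0_0 : cornFn p 0 ∉ sockVerts s₀ := by rw [hV0, sb0]; exact fun h => h.elim hR0 hR3
      have hv1_0 : cornFn p 0 ∈ sockVerts s₁ := by rw [hV1, sb0]; exact Or.inl hR0
      have hv0_1 : cornFn p 1 ∉ sockVerts s₀ := by rw [hV0, sb1]; exact fun h => h.elim hR1 hR0
      have hv1_1 : cornFn p 1 ∈ sockVerts s₁ := by rw [hV1, sb1]; exact Or.inl hR1
      have hv0_2 : cornFn p 2 ∈ sockVerts s₀ := by rw [hV0, sb2]; exact Or.inl hR2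
      have hv1_2 : cornFn p 2 ∈ sockVerts s₁ := by rw [hV1, sb2]; exact Or.inr hR1
      have hv0_3 : cornFn p 3 ∈ sockVerts s₀ := by rw [hV0, sb3]; exact Or.inr hR2
      have hv1_3 : cornFn p 3 ∈ sockVerts s₁ := by rw [hV1, sb3]; exact Or.inl hR3
      have hlp0 := hlost 0 1 (by decide) hv0_0 hv0_1 hv1_0 hv1_1
      have hst2 := hstab 2 hv0_2 hv1_2
      have hst3 := hstab 3 hv0_3 hv1_3
      linear_combination hlp0 + hst2 + hst3
    · have hv0_0 : cornFn p 0 ∈ sockVerts s₀ := by rw [hV0, sb0]; exact Or.inr hR3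
      have hv1_0 : cornFn p 0 ∈ sockVerts s₁ := by rw [hV1, sb0]; exact Or.inl hR0
      have hv0_1 : cornFn p 1 ∉ sockVerts s₀ := by rw [hV0, sb1]; exact fun h => h.elim hR1 hR0
      have hv1_1 : cornFn p 1 ∈ sockVerts s₁ := by rw [hV1, sb1]; exact Or.inl hR1
      have hv0_2 : cornFn p 2 ∉ sockVerts s₀ := by rw [hV0, sb2]; exact fun h => h.elim hR2 hR1
      have hv1_2 : cornFn p 2 ∈ sockVerts s₁ := by rw [hV1, sb2]; exact Or.inl hR2
      have hv0_3 : cornFn p 3 ∈ sockVerts s₀ := by rw [hV0, sb3]; exact Or.inl hR3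
      have hv1_3 : cornFn p 3 ∈ sockVerts s₁ := by rw [hV1, sb3]; exact Or.inr hR2
      have hlp0 := hlost 1 2 (by decide) hv0_1 hv0_2 hv1_1 hv1_2
      have hst0 := hstab 0 hv0_0 hv1_0
      have hst3 := hstab 3 hv0_3 hv1_3
      linear_combination hlp0 + hst0 + hst3
    · have hv0_0 : cornFn p 0 ∉ sockVerts s₀ := by rw [hV0, sb0]; exact fun h => h.elim hR0 hR3
      have hv1_0 : cornFn p 0 ∈ sockVerts s₁ := by rw [hV1, sb0]; exact Or.inl hR0
      have hv0_1 : cornFn p 1 ∉ sockVerts s₀ := by rw [hV0, sb1]; exact fun h => h.elim hR1 hR0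
      have hv1_1 : cornFn p 1 ∈ sockVerts s₁ := by rw [hV1, sb1]; exact Or.inl hR1
      have hv0_2 : cornFn p 2 ∉ sockVerts s₀ := by rw [hV0, sb2]; exact fun h => h.elim hR2 hR1
      have hv1_2 : cornFn p 2 ∈ sockVerts s₁ := by rw [hV1, sb2]; exact Or.inl hR2
      have hv0_3 : cornFn p 3 ∉ sockVerts s₀ := by rw [hV0, sb3]; exact fun h => h.elim hR3 hR2
      have hv1_3 : cornFn p 3 ∈ sockVerts s₁ := by rw [hV1, sb3]; exact Or.inl hR3
      have hlp0 := hlost 0 1 (by decide) hv0_0 hv0_1 hv1_0 hv1_1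
      have hlp1 := hlost 2 3 (by decide) hv0_2 hv0_3 hv1_2 hv1_3
      linear_combination hlp0 + hlp1
  · have sb0 : (0:Fin 4) - 3 = 1 := by decide
    have a0 : (0:Fin 4) + 3 = 3 := by decide
    have sb1 : (1:Fin 4) - 3 = 2 := by decide
    have a1 : (1:Fin 4) + 3 = 0 := by decide
    have sb2 : (2:Fin 4) - 3 = 3 := by decide
    have a2 : (2:Fin 4) + 3 = 1 := by decide
    have sb3 : (3:Fin 4) - 3 = 0 := by decide
    have a3 : (3:Fin 4) + 3 = 2 := by decide
    rcases Classical.em (R 0) with hR0 | hR0 <;> rcases Classical.em (R 1) with hR1 | hR1 <;> rcases Classical.em (R 2) with hR2 | hR2 <;> rcases Classical.em (R 3) with hR3 | hR3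
    · have hv0_0 : cornFn p 0 ∈ sockVerts s₀ := by rw [hV0, sb0]; exact Or.inl hR0
      have hv1_0 : cornFn p 0 ∉ sockVerts s₁ := by rw [hV1, sb0]; exact fun h => h.elim (fun x => x hR0) (fun x => x hR1)
      have hv0_1 : cornFn p 1 ∈ sockVerts s₀ := by rw [hV0, sb1]; exact Or.inl hR1
      have hv1_1 : cornFn p 1 ∉ sockVerts s₁ := by rw [hV1, sb1]; exact fun h => h.elim (fun x => x hR1) (fun x => x hR2)
      have hv0_2 : cornFn p 2 ∈ sockVerts s₀ := by rw [hV0, sb2]; exact Or.inl hR2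
      have hv1_2 : cornFn p 2 ∉ sockVerts s₁ := by rw [hV1, sb2]; exact fun h => h.elim (fun x => x hR2) (fun x => x hR3)
      have hv0_3 : cornFn p 3 ∈ sockVerts s₀ := by rw [hV0, sb3]; exact Or.inl hR3
      have hv1_3 : cornFn p 3 ∉ sockVerts s₁ := by rw [hV1, sb3]; exact fun h => h.elim (fun x => x hR3) (fun x => x hR0)
      have hgp0 := hgain 0 1 (by decide) hv0_0 hv0_1 hv1_0 hv1_1
      have hgp1 := hgain 2 3 (by decide) hv0_2 hv0_3 hv1_2 hv1_3
      linear_combination hgp0 + hgp1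
    · have hv0_0 : cornFn p 0 ∈ sockVerts s₀ := by rw [hV0, sb0]; exact Or.inl hR0
      have hv1_0 : cornFn p 0 ∉ sockVerts s₁ := by rw [hV1, sb0]; exact fun h => h.elim (fun x => x hR0) (fun x => x hR1)
      have hv0_1 : cornFn p 1 ∈ sockVerts s₀ := by rw [hV0, sb1]; exact Or.inl hR1
      have hv1_1 : cornFn p 1 ∉ sockVerts s₁ := by rw [hV1, sb1]; exact fun h => h.elim (fun x => x hR1) (fun x => x hR2)
      have hv0_2 : cornFn p 2 ∈ sockVerts s₀ := by rw [hV0, sb2]; exact Or.inl hR2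
      have hv1_2 : cornFn p 2 ∈ sockVerts s₁ := by rw [hV1, sb2]; exact Or.inr hR3
      have hv0_3 : cornFn p 3 ∈ sockVerts s₀ := by rw [hV0, sb3]; exact Or.inr hR0
      have hv1_3 : cornFn p 3 ∈ sockVerts s₁ := by rw [hV1, sb3]; exact Or.inl hR3
      have hgp0 := hgain 0 1 (by decide) hv0_0 hv0_1 hv1_0 hv1_1
      have hst2 := hstab 2 hv0_2 hv1_2
      have hst3 := hstab 3 hv0_3 hv1_3
      linear_combination hgp0 + hst2 + hst3
    · have hv0_0 : cornFn p 0 ∈ sockVerts s₀ := by rw [hV0, sb0]; exact Or.inl hR0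
      have hv1_0 : cornFn p 0 ∉ sockVerts s₁ := by rw [hV1, sb0]; exact fun h => h.elim (fun x => x hR0) (fun x => x hR1)
      have hv0_1 : cornFn p 1 ∈ sockVerts s₀ := by rw [hV0, sb1]; exact Or.inl hR1
      have hv1_1 : cornFn p 1 ∈ sockVerts s₁ := by rw [hV1, sb1]; exact Or.inr hR2
      have hv0_2 : cornFn p 2 ∈ sockVerts s₀ := by rw [hV0, sb2]; exact Or.inr hR3
      have hv1_2 : cornFn p 2 ∈ sockVerts s₁ := by rw [hV1, sb2]; exact Or.inl hR2
      have hv0_3 : cornFn p 3 ∈ sockVerts s₀ := by rw [hV0, sb3]; exact Or.inl hR3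
      have hv1_3 : cornFn p 3 ∉ sockVerts s₁ := by rw [hV1, sb3]; exact fun h => h.elim (fun x => x hR3) (fun x => x hR0)
      have hgp0 := hgain 3 0 (by decide) hv0_3 hv0_0 hv1_3 hv1_0
      have hst1 := hstab 1 hv0_1 hv1_1
      have hst2 := hstab 2 hv0_2 hv1_2
      linear_combination hgp0 + hst1 + hst2
    · exfalso
      apply hpat 1
      refine ⟨?_, ?_, ?_, ?_⟩ <;> first | assumption | (simp only [a0, a1, a2, a3]; assumption)
    · have hv0_0 : cornFn p 0 ∈ sockVerts s₀ := by rw [hV0, sb0]; exact Or.inl hR0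
      have hv1_0 : cornFn p 0 ∈ sockVerts s₁ := by rw [hV1, sb0]; exact Or.inr hR1
      have hv0_1 : cornFn p 1 ∈ sockVerts s₀ := by rw [hV0, sb1]; exact Or.inr hR2
      have hv1_1 : cornFn p 1 ∈ sockVerts s₁ := by rw [hV1, sb1]; exact Or.inl hR1
      have hv0_2 : cornFn p 2 ∈ sockVerts s₀ := by rw [hV0, sb2]; exact Or.inl hR2
      have hv1_2 : cornFn p 2 ∉ sockVerts s₁ := by rw [hV1, sb2]; exact fun h => h.elim (fun x => x hR2) (fun x => x hR3)
      have hv0_3 : cornFn p 3 ∈ sockVerts s₀ := by rw [hV0, sb3]; exact Or.inl hR3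
      have hv1_3 : cornFn p 3 ∉ sockVerts s₁ := by rw [hV1, sb3]; exact fun h => h.elim (fun x => x hR3) (fun x => x hR0)
      have hgp0 := hgain 2 3 (by decide) hv0_2 hv0_3 hv1_2 hv1_3
      have hst0 := hstab 0 hv0_0 hv1_0
      have hst1 := hstab 1 hv0_1 hv1_1
      linear_combination hgp0 + hst0 + hst1
    · have hv0_0 : cornFn p 0 ∈ sockVerts s₀ := by rw [hV0, sb0]; exact Or.inl hR0
      have hv1_0 : cornFn p 0 ∈ sockVerts s₁ := by rw [hV1, sb0]; exact Or.inr hR1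
      have hv0_1 : cornFn p 1 ∈ sockVerts s₀ := by rw [hV0, sb1]; exact Or.inr hR2
      have hv1_1 : cornFn p 1 ∈ sockVerts s₁ := by rw [hV1, sb1]; exact Or.inl hR1
      have hv0_2 : cornFn p 2 ∈ sockVerts s₀ := by rw [hV0, sb2]; exact Or.inl hR2
      have hv1_2 : cornFn p 2 ∈ sockVerts s₁ := by rw [hV1, sb2]; exact Or.inr hR3
      have hv0_3 : cornFn p 3 ∈ sockVerts s₀ := by rw [hV0, sb3]; exact Or.inr hR0
      have hv1_3 : cornFn p 3 ∈ sockVerts s₁ := by rw [hV1, sb3]; exact Or.inl hR3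
      have hst0 := hstab 0 hv0_0 hv1_0
      have hst1 := hstab 1 hv0_1 hv1_1
      have hst2 := hstab 2 hv0_2 hv1_2
      have hst3 := hstab 3 hv0_3 hv1_3
      linear_combination hst0 + hst1 + hst2 + hst3
    · exfalso
      apply hpat 0
      refine ⟨?_, ?_, ?_, ?_⟩ <;> first | assumption | (simp only [a0, a1, a2, a3]; assumption)
    · have hv0_0 : cornFn p 0 ∈ sockVerts s₀ := by rw [hV0, sb0]; exact Or.inl hR0
      have hv1_0 : cornFn p 0 ∈ sockVerts s₁ := by rw [hV1, sb0]; exact Or.inr hR1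
      have hv0_1 : cornFn p 1 ∉ sockVerts s₀ := by rw [hV0, sb1]; exact fun h => h.elim hR1 hR2
      have hv1_1 : cornFn p 1 ∈ sockVerts s₁ := by rw [hV1, sb1]; exact Or.inl hR1
      have hv0_2 : cornFn p 2 ∉ sockVerts s₀ := by rw [hV0, sb2]; exact fun h => h.elim hR2 hR3
      have hv1_2 : cornFn p 2 ∈ sockVerts s₁ := by rw [hV1, sb2]; exact Or.inl hR2
      have hv0_3 : cornFn p 3 ∈ sockVerts s₀ := by rw [hV0, sb3]; exact Or.inr hR0
      have hv1_3 : cornFn p 3 ∈ sockVerts s₁ := by rw [hV1, sb3]; exact Or.inl hR3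
      have hlp0 := hlost 1 2 (by decide) hv0_1 hv0_2 hv1_1 hv1_2
      have hst0 := hstab 0 hv0_0 hv1_0
      have hst3 := hstab 3 hv0_3 hv1_3
      linear_combination hlp0 + hst0 + hst3
    · have hv0_0 : cornFn p 0 ∈ sockVerts s₀ := by rw [hV0, sb0]; exact Or.inr hR1
      have hv1_0 : cornFn p 0 ∈ sockVerts s₁ := by rw [hV1, sb0]; exact Or.inl hR0
      have hv0_1 : cornFn p 1 ∈ sockVerts s₀ := by rw [hV0, sb1]; exact Or.inl hR1
      have hv1_1 : cornFn p 1 ∉ sockVerts s₁ := by rw [hV1, sb1]; exact fun h => h.elim (fun x => x hR1) (fun x => x hR2)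
      have hv0_2 : cornFn p 2 ∈ sockVerts s₀ := by rw [hV0, sb2]; exact Or.inl hR2
      have hv1_2 : cornFn p 2 ∉ sockVerts s₁ := by rw [hV1, sb2]; exact fun h => h.elim (fun x => x hR2) (fun x => x hR3)
      have hv0_3 : cornFn p 3 ∈ sockVerts s₀ := by rw [hV0, sb3]; exact Or.inl hR3
      have hv1_3 : cornFn p 3 ∈ sockVerts s₁ := by rw [hV1, sb3]; exact Or.inr hR0
      have hgp0 := hgain 1 2 (by decide) hv0_1 hv0_2 hv1_1 hv1_2
      have hst0 := hstab 0 hv0_0 hv1_0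
      have hst3 := hstab 3 hv0_3 hv1_3
      linear_combination hgp0 + hst0 + hst3
    · exfalso
      apply hpat 2
      refine ⟨?_, ?_, ?_, ?_⟩ <;> first | assumption | (simp only [a0, a1, a2, a3]; assumption)
    · have hv0_0 : cornFn p 0 ∈ sockVerts s₀ := by rw [hV0, sb0]; exact Or.inr hR1
      have hv1_0 : cornFn p 0 ∈ sockVerts s₁ := by rw [hV1, sb0]; exact Or.inl hR0
      have hv0_1 : cornFn p 1 ∈ sockVerts s₀ := by rw [hV0, sb1]; exact Or.inl hR1
      have hv1_1 : cornFn p 1 ∈ sockVerts s₁ := by rw [hV1, sb1]; exact Or.inr hR2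
      have hv0_2 : cornFn p 2 ∈ sockVerts s₀ := by rw [hV0, sb2]; exact Or.inr hR3
      have hv1_2 : cornFn p 2 ∈ sockVerts s₁ := by rw [hV1, sb2]; exact Or.inl hR2
      have hv0_3 : cornFn p 3 ∈ sockVerts s₀ := by rw [hV0, sb3]; exact Or.inl hR3
      have hv1_3 : cornFn p 3 ∈ sockVerts s₁ := by rw [hV1, sb3]; exact Or.inr hR0
      have hst0 := hstab 0 hv0_0 hv1_0
      have hst1 := hstab 1 hv0_1 hv1_1
      have hst2 := hstab 2 hv0_2 hv1_2
      have hst3 := hstab 3 hv0_3 hv1_3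
      linear_combination hst0 + hst1 + hst2 + hst3
    · have hv0_0 : cornFn p 0 ∈ sockVerts s₀ := by rw [hV0, sb0]; exact Or.inr hR1
      have hv1_0 : cornFn p 0 ∈ sockVerts s₁ := by rw [hV1, sb0]; exact Or.inl hR0
      have hv0_1 : cornFn p 1 ∈ sockVerts s₀ := by rw [hV0, sb1]; exact Or.inl hR1
      have hv1_1 : cornFn p 1 ∈ sockVerts s₁ := by rw [hV1, sb1]; exact Or.inr hR2
      have hv0_2 : cornFn p 2 ∉ sockVerts s₀ := by rw [hV0, sb2]; exact fun h => h.elim hR2 hR3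
      have hv1_2 : cornFn p 2 ∈ sockVerts s₁ := by rw [hV1, sb2]; exact Or.inl hR2
      have hv0_3 : cornFn p 3 ∉ sockVerts s₀ := by rw [hV0, sb3]; exact fun h => h.elim hR3 hR0
      have hv1_3 : cornFn p 3 ∈ sockVerts s₁ := by rw [hV1, sb3]; exact Or.inl hR3
      have hlp0 := hlost 2 3 (by decide) hv0_2 hv0_3 hv1_2 hv1_3
      have hst0 := hstab 0 hv0_0 hv1_0
      have hst1 := hstab 1 hv0_1 hv1_1
      linear_combination hlp0 + hst0 + hst1
    · exfalso
      apply hpat 3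
      refine ⟨?_, ?_, ?_, ?_⟩ <;> first | assumption | (simp only [a0, a1, a2, a3]; assumption)
    · have hv0_0 : cornFn p 0 ∉ sockVerts s₀ := by rw [hV0, sb0]; exact fun h => h.elim hR0 hR1
      have hv1_0 : cornFn p 0 ∈ sockVerts s₁ := by rw [hV1, sb0]; exact Or.inl hR0
      have hv0_1 : cornFn p 1 ∈ sockVerts s₀ := by rw [hV0, sb1]; exact Or.inr hR2
      have hv1_1 : cornFn p 1 ∈ sockVerts s₁ := by rw [hV1, sb1]; exact Or.inl hR1
      have hv0_2 : cornFn p 2 ∈ sockVerts s₀ := by rw [hV0, sb2]; exact Or.inl hR2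
      have hv1_2 : cornFn p 2 ∈ sockVerts s₁ := by rw [hV1, sb2]; exact Or.inr hR3
      have hv0_3 : cornFn p 3 ∉ sockVerts s₀ := by rw [hV0, sb3]; exact fun h => h.elim hR3 hR0
      have hv1_3 : cornFn p 3 ∈ sockVerts s₁ := by rw [hV1, sb3]; exact Or.inl hR3
      have hlp0 := hlost 3 0 (by decide) hv0_3 hv0_0 hv1_3 hv1_0
      have hst1 := hstab 1 hv0_1 hv1_1
      have hst2 := hstab 2 hv0_2 hv1_2
      linear_combination hlp0 + hst1 + hst2
    · have hv0_0 : cornFn p 0 ∉ sockVerts s₀ := by rw [hV0, sb0]; exact fun h => h.elim hR0 hR1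
      have hv1_0 : cornFn p 0 ∈ sockVerts s₁ := by rw [hV1, sb0]; exact Or.inl hR0
      have hv0_1 : cornFn p 1 ∉ sockVerts s₀ := by rw [hV0, sb1]; exact fun h => h.elim hR1 hR2
      have hv1_1 : cornFn p 1 ∈ sockVerts s₁ := by rw [hV1, sb1]; exact Or.inl hR1
      have hv0_2 : cornFn p 2 ∈ sockVerts s₀ := by rw [hV0, sb2]; exact Or.inr hR3
      have hv1_2 : cornFn p 2 ∈ sockVerts s₁ := by rw [hV1, sb2]; exact Or.inl hR2
      have hv0_3 : cornFn p 3 ∈ sockVerts s₀ := by rw [hV0, sb3]; exact Or.inl hR3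
      have hv1_3 : cornFn p 3 ∈ sockVerts s₁ := by rw [hV1, sb3]; exact Or.inr hR0
      have hlp0 := hlost 0 1 (by decide) hv0_0 hv0_1 hv1_0 hv1_1
      have hst2 := hstab 2 hv0_2 hv1_2
      have hst3 := hstab 3 hv0_3 hv1_3
      linear_combination hlp0 + hst2 + hst3
    · have hv0_0 : cornFn p 0 ∉ sockVerts s₀ := by rw [hV0, sb0]; exact fun h => h.elim hR0 hR1
      have hv1_0 : cornFn p 0 ∈ sockVerts s₁ := by rw [hV1, sb0]; exact Or.inl hR0
      have hv0_1 : cornFn p 1 ∉ sockVerts s₀ := by rw [hV0, sb1]; exact fun h => h.elim hR1 hR2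
      have hv1_1 : cornFn p 1 ∈ sockVerts s₁ := by rw [hV1, sb1]; exact Or.inl hR1
      have hv0_2 : cornFn p 2 ∉ sockVerts s₀ := by rw [hV0, sb2]; exact fun h => h.elim hR2 hR3
      have hv1_2 : cornFn p 2 ∈ sockVerts s₁ := by rw [hV1, sb2]; exact Or.inl hR2
      have hv0_3 : cornFn p 3 ∉ sockVerts s₀ := by rw [hV0, sb3]; exact fun h => h.elim hR3 hR0
      have hv1_3 : cornFn p 3 ∈ sockVerts s₁ := by rw [hV1, sb3]; exact Or.inl hR3
      have hlp0 := hlost 0 1 (by decide) hv0_0 hv0_1 hv1_0 hv1_1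
      have hlp1 := hlost 2 3 (by decide) hv0_2 hv0_3 hv1_2 hv1_3
      linear_combination hlp0 + hlp1


-- ======== main step and theorem ========

lemma Psock_flipMove {s₀ s₁ : Sock} (h : FlipMoveSock s₀ s₁) : Psock s₀ = Psock s₁ := by
  obtain ⟨p, o, hmv, hnot⟩ := h
  rcases K_dichotomy hmv with hK | hEq
  · refine core s₀ s₁ p (if o then 1 else 3)
      (fun i => rev (outeFn p (if o then 1 else 3) i) ∈ sockEdges s₀) ?_ ?_ ?_ ?_ ?_ ?_
    · cases o
      · exact Or.inr (by simp)
      · exact Or.inl (by simp)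
    · intro j hj
      rw [windS_SqMove hmv hK j, if_neg hj, add_zero]
    · exact V_offcorner hmv
    · exact V0_crit rfl hmv hK
    · exact V1_crit rfl hmv hK
    · exact pat_of_not_twoAdj rfl hnot
  · exact Psock_congr_edges hEq.symm

end PsockAux

/-- Flip homotopic systems of cycles in ℤ² have the same invariant. -/
theorem Psock_flipHomotopic_invariant (s₀ s₁ : Sock) (h : FlipHomotopic s₀ s₁) :
    Psock s₀ = Psock s₁ := by
  induction h with
  | refl => rfl
  | tail _ hstep ih => exact ih.trans (PsockAux.Psock_flipMove hstep)
end
end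

section
/- If t₀ and t₁ are tilings of a duplex region R lying in the same flip connected component of R, then for every two-floored box B containing R, the embeddings of t₀ and t₁ in B lie in the same flip connected component of B. -/
noncomputable section
open Classical
attribute [local instance] Classical.propDecidable

lemma zDimer_not_subset_duplex (D : Finset Sq) (s : Sq) (hs : s ∉ D) :
    ¬ zDimerAt s ⊆ duplexCells D := by
  intro h
  have h0 : ((s.1, s.2, 0) : Cell) ∈ duplexCells D := h (by simp [zDimerAt])
  simp only [duplexCells, twoStoryCells, floorCells, Finset.mem_union,
    Finset.mem_image, Prod.mk.injEq] at h0
  rcases h0 with ⟨x, hx, h1, h2, _⟩ | ⟨x, hx, h1, h2, h3⟩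
  · exact hs (by rwa [show x = s from Prod.ext h1 h2] at hx)
  · exact absurd h3 (by norm_num)

lemma flipstep_lift (D : Finset Sq) (a b : Sq) (T T' : Finset (Finset Cell))
    (hT : ∀ d ∈ T, d ⊆ duplexCells D) (h : FlipStep T T') :
    (∀ d ∈ T', d ⊆ duplexCells D) ∧ FlipStep (embed2 D a b T) (embed2 D a b T') := by
  obtain ⟨d₁, d₂, d₃, d₄, h1, h2, h3, h4, i1, i2, i3, i4, dj1, dj2, hu, hne, hset⟩ := h
  have hR1 := hT d₁ h1
  have hR2 := hT d₂ h2
  have hR12 : d₁ ∪ d₂ ⊆ duplexCells D := Finset.union_subset hR1 hR2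
  have hR3 : d₃ ⊆ duplexCells D :=
    fun c hc => hR12 (hu ▸ Finset.mem_union_left _ hc)
  have hR4 : d₄ ⊆ duplexCells D :=
    fun c hc => hR12 (hu ▸ Finset.mem_union_right _ hc)
  have hT' : ∀ d ∈ T', d ⊆ duplexCells D := by
    intro d hd
    by_cases hd34 : d ∈ ({d₃, d₄} : Finset (Finset Cell))
    · rcases Finset.mem_insert.1 hd34 with rfl | hd4
      · exact hR3
      · rw [Finset.mem_singleton.1 hd4]; exact hR4
    · have : d ∈ T' \ {d₃, d₄} := Finset.mem_sdiff.2 ⟨hd, hd34⟩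
      rw [← hset] at this
      exact hT d (Finset.mem_sdiff.1 this).1
  refine ⟨hT', d₁, d₂, d₃, d₄, ?_, ?_, ?_, ?_, i1, i2, i3, i4, dj1, dj2, hu, hne, ?_⟩
  · exact Finset.mem_union_left _ h1
  · exact Finset.mem_union_left _ h2
  · exact Finset.mem_union_left _ h3
  · exact Finset.mem_union_left _ h4
  · -- set equality
    set E : Finset (Finset Cell) := (boxSq a b \ D).image zDimerAt with hE
    have hEsub : ∀ d ∈ E, d ⊆ duplexCells D → False := by
      intro d hd hsub
      obtain ⟨s, hs, rfl⟩ := Finset.mem_image.1 hd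
      exact zDimer_not_subset_duplex D s (Finset.mem_sdiff.1 hs).2 hsub
    have key : ∀ (S : Finset (Finset Cell)) (e₁ e₂ : Finset Cell),
        e₁ ⊆ duplexCells D → e₂ ⊆ duplexCells D →
        (S ∪ E) \ {e₁, e₂} = (S \ {e₁, e₂}) ∪ E := by
      intro S e₁ e₂ he₁ he₂
      rw [Finset.union_sdiff_distrib]
      congr 1
      apply Finset.sdiff_eq_self_of_disjoint
      rw [Finset.disjoint_left]
      intro d hd hd'
      rcases Finset.mem_insert.1 hd' with rfl | hd''
      · exact hEsub d hd he₁
      · rw [Finset.mem_singleton.1 hd''] at hd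
        exact hEsub _ hd he₂
    show (T ∪ E) \ {d₁, d₂} = (T' ∪ E) \ {d₃, d₄}
    rw [key T d₁ d₂ hR1 hR2, key T' d₃ d₄ hR3 hR4, hset]

lemma flipConnected_lift_aux (D : Finset Sq) (a b : Sq)
    (T T' : Finset (Finset Cell)) (hconn : FlipConnected T T')
    (hT : ∀ d ∈ T, d ⊆ duplexCells D) :
    (∀ d ∈ T', d ⊆ duplexCells D) ∧
      FlipConnected (embed2 D a b T) (embed2 D a b T') := by
  induction hconn with
  | refl => exact ⟨hT, Relation.ReflTransGen.refl⟩
  | tail _ hstep ih =>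
    obtain ⟨hmid, hc⟩ := ih
    obtain ⟨hfin, hstep'⟩ := flipstep_lift D a b _ _ hmid hstep
    exact ⟨hfin, hc.tail hstep'⟩

/-- A flip connection between two tilings of a duplex region lifts to
their embeddings in any two-floored box containing the region. -/
theorem flipConnected_lifts_to_embedding (D : Finset Sq)
    (hsc : SimplyConnectedSpace (planeRegion D))
    (T₀ T₁ : Finset (Finset Cell))
    (h₀ : IsTiling (duplexCells D) T₀) (h₁ : IsTiling (duplexCells D) T₁)
    (hconn : FlipConnected T₀ T₁)
    (a b : Sq) (hbox : D ⊆ boxSq a b) :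
    FlipConnected (embed2 D a b T₀) (embed2 D a b T₁) := by
  exact (flipConnected_lift_aux D a b T₀ T₁ hconn (fun d hd => (h₀.1 d hd).2)).2
end
end
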